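/- arXiv:2411.19936 — 2 statements merged into one kernel-verified Lean document; each statement's English description precedes it below -/
import Mathlib

section
/- For every integer k with 0 ≤ k ≤ r, the assignment Ψ ↦ F(Ψ) is a bijection from the set of maximal closed root subsystems of Φ of rank r − k onto the set of subsets P ⊆ Φ⁺ of cardinality r − k satisfying condition (⋆), and its inverse is P ↦ G(P). -/
open scoped Classical
noncomputable section

/-- `Ψ` is a closed root subsystem of `Θ`. -/
def IsClosedSub {E : Type*} [AddCommGroup E] (Θ Ψ : Set E) : Prop :=
  Ψ ⊆ Θ ∧ (∀ l ∈ Ψ, -l ∈ Ψ) ∧ ∀ l ∈ Ψ, ∀ m ∈ Ψ, l + m ∈ Θ → l + m ∈ Ψ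

/-- The rank of a subset: the dimension of its `ℚ`-linear span. -/
def rankOf {E : Type*} [AddCommGroup E] [Module ℚ E] (Ψ : Set E) : ℕ :=
  Module.finrank ℚ (Submodule.span ℚ Ψ)

/-- `Ψ` is a maximal closed root subsystem of `Θ` of rank `m`. -/
def IsMaxClosedOfRank {E : Type*} [AddCommGroup E] [Module ℚ E] (Θ Ψ : Set E) (m : ℕ) : Prop :=
  IsClosedSub Θ Ψ ∧ rankOf Ψ = m ∧
    ∀ Ψ' : Set E, IsClosedSub Θ Ψ' → rankOf Ψ' = m → Ψ ⊆ Ψ' → Ψ' = Ψ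

/-- The (1-based) standard basis vector `e_i` of `ℚ^{r+1}`. -/
def eA (r : ℕ) (i : ℕ) : Fin (r + 1) → ℚ := fun t => if (t : ℕ) + 1 = i then 1 else 0

/-- The positive root `α_{i,j} = e_i − e_{j+1}` of type `A_r`. -/
def alphaA (r : ℕ) (i j : ℕ) : Fin (r + 1) → ℚ := eA r i - eA r (j + 1)

/-- The root system of type `A_r`: the vectors `e_i − e_j`, `1 ≤ i, j ≤ r+1`, `i ≠ j`. -/
def rootsA (r : ℕ) : Set (Fin (r + 1) → ℚ) :=
  {v | ∃ i j : ℕ, 1 ≤ i ∧ i ≤ r + 1 ∧ 1 ≤ j ∧ j ≤ r + 1 ∧ i ≠ j ∧ v = eA r i - eA r j}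

/-- The positive roots of type `A_r`: the `α_{i,j}` for `1 ≤ i ≤ j ≤ r`. -/
def posA (r : ℕ) : Set (Fin (r + 1) → ℚ) :=
  {v | ∃ i j : ℕ, 1 ≤ i ∧ i ≤ j ∧ j ≤ r ∧ v = alphaA r i j}

/-- `F(Ψ)`: the `α_{i,j} ∈ Ψ` such that no `α_{i,j′}` with `i ≤ j′ < j` lies in `Ψ`
and no `α_{i′,j}` with `i < i′ ≤ j` lies in `Ψ`. -/
def FmapA (r : ℕ) (Ψ : Set (Fin (r + 1) → ℚ)) : Set (Fin (r + 1) → ℚ) :=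
  {v | ∃ i j : ℕ, 1 ≤ i ∧ i ≤ j ∧ j ≤ r ∧ v = alphaA r i j ∧ v ∈ Ψ ∧
    (∀ j' : ℕ, i ≤ j' → j' < j → alphaA r i j' ∉ Ψ) ∧
    ∀ i' : ℕ, i < i' → i' ≤ j → alphaA r i' j ∉ Ψ}

/-- Condition (⋆): any two distinct elements `α_{i,j}` and `α_{i′,j′}` of `P`
have `i ≠ i′` and `j ≠ j′`. -/
def starA (r : ℕ) (P : Set (Fin (r + 1) → ℚ)) : Prop :=
  ∀ i j i' j' : ℕ, 1 ≤ i → i ≤ j → j ≤ r → 1 ≤ i' → i' ≤ j' → j' ≤ r →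
    alphaA r i j ∈ P → alphaA r i' j' ∈ P → alphaA r i j ≠ alphaA r i' j' →
    i ≠ i' ∧ j ≠ j'

/-- `G(P)`: the smallest closed root subsystem of `Φ` containing `P`, i.e. the
intersection of all closed root subsystems of `Φ` that contain `P`. -/
def GmapA (r : ℕ) (P : Set (Fin (r + 1) → ℚ)) : Set (Fin (r + 1) → ℚ) :=
  ⋂₀ {Θ : Set (Fin (r + 1) → ℚ) | IsClosedSub (rootsA r) Θ ∧ P ⊆ Θ}

namespace Aux
variable {r : ℕ}
variable {Ψ P : Set (Fin (r + 1) → ℚ)}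

def pt (r : ℕ) (x : ℕ) (hx : 1 ≤ x ∧ x ≤ r + 1) : Fin (r+1) := ⟨x - 1, by omega⟩

lemma eA_pt (i x : ℕ) (hx : 1 ≤ x ∧ x ≤ r + 1) :
    eA r i (pt r x hx) = if x = i then 1 else 0 := by
  unfold eA pt
  simp only
  congr 1
  · rw [eq_iff_iff]; omega

lemma alpha_eq (a b : ℕ) (hb : 1 ≤ b) : alphaA r a (b-1) = eA r a - eA r b := by
  unfold alphaA
  rw [Nat.sub_add_cancel hb]

lemma decode {a b c d : ℕ} (ha : 1 ≤ a ∧ a ≤ r+1) (hb : 1 ≤ b ∧ b ≤ r+1)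
    (hc : 1 ≤ c ∧ c ≤ r+1) (hd : 1 ≤ d ∧ d ≤ r+1) (hab : a ≠ b) (hcd : c ≠ d)
    (h : eA r a - eA r b = eA r c - eA r d) : a = c ∧ b = d := by
  have h1 := congrFun h (pt r a ha)
  have h2 := congrFun h (pt r b hb)
  simp only [Pi.sub_apply, eA_pt] at h1 h2
  constructor
  · split_ifs at h1 with u1 u2 u3 u4 u5 <;> first | assumption | (exfalso; omega) | (exfalso; norm_num at h1)
  · split_ifs at h2 with u1 u2 u3 u4 u5 <;> first | assumption | (exfalso; omega) | (exfalso; norm_num at h2)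

lemma mem_rootsA {a b : ℕ} (ha : 1 ≤ a ∧ a ≤ r+1) (hb : 1 ≤ b ∧ b ≤ r+1) (hab : a ≠ b) :
    eA r a - eA r b ∈ rootsA r := ⟨a, b, ha.1, ha.2, hb.1, hb.2, hab, rfl⟩

lemma sum_decode {a b c d i j : ℕ} (ha : 1 ≤ a ∧ a ≤ r+1) (hb : 1 ≤ b ∧ b ≤ r+1)
    (hc : 1 ≤ c ∧ c ≤ r+1) (hd : 1 ≤ d ∧ d ≤ r+1) (hi : 1 ≤ i ∧ i ≤ r+1) (hj : 1 ≤ j ∧ j ≤ r+1)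
    (hab : a ≠ b) (hcd : c ≠ d) (hij : i ≠ j)
    (h : (eA r a - eA r b) + (eA r c - eA r d) = eA r i - eA r j) :
    (b = c ∧ i = a ∧ j = d) ∨ (a = d ∧ i = c ∧ j = b) := by
  by_cases hbc : b = c
  · left
    refine ⟨hbc, ?_⟩
    subst hbc
    have h' : eA r a - eA r d = eA r i - eA r j := by rw [← h]; abel
    by_cases had : a = d
    · exfalso
      subst had
      have h0 := congrFun h' (pt r i hi)
      simp only [Pi.sub_apply, eA_pt] at h0
      split_ifs at h0 <;> first | omega | norm_num at h0
    · have := decode ha hd hi hj had hij h'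
      exact ⟨this.1.symm, this.2.symm⟩
  · right
    have hb' := congrFun h (pt r b hb)
    have hc' := congrFun h (pt r c hc)
    have ha' := congrFun h (pt r a ha)
    simp only [Pi.add_apply, Pi.sub_apply, eA_pt] at hb' hc' ha'
    have hjb : j = b := by
      split_ifs at hb' <;> first | omega | norm_num at hb' | assumption | skip
      all_goals (exfalso; norm_num at hb')
    have hic : i = c := by
      subst hjb
      split_ifs at hc' <;> first | omega | assumption | (exfalso; norm_num at hc')
    have had : a = d := by
      subst hjb; subst hic
      split_ifs at ha' <;> first | omega | assumption | (exfalso; norm_num at ha')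
    exact ⟨had, hic, hjb⟩

lemma neg_edge (hΨ : IsClosedSub (rootsA r) Ψ) {a b : ℕ} (h : eA r a - eA r b ∈ Ψ) :
    eA r b - eA r a ∈ Ψ := by
  have := hΨ.2.1 _ h
  rwa [neg_sub] at this

lemma trans_edge (hΨ : IsClosedSub (rootsA r) Ψ) {a b c : ℕ}
    (ha : 1 ≤ a ∧ a ≤ r+1) (hc : 1 ≤ c ∧ c ≤ r+1) (hac : a ≠ c)
    (h1 : eA r a - eA r b ∈ Ψ) (h2 : eA r b - eA r c ∈ Ψ) : eA r a - eA r c ∈ Ψ := by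
  have := hΨ.2.2 _ h1 _ h2 (by rw [sub_add_sub_cancel]; exact mem_rootsA ha hc hac)
  rwa [sub_add_sub_cancel] at this

/-- telescoping: any `e_a - e_b ∈ Ψ` (a < b) lies in any `Θ ⊇ F(Ψ)` closed under
the relevant additions. -/
lemma tele (hΨ : IsClosedSub (rootsA r) Ψ) (Θ : Set (Fin (r + 1) → ℚ))
    (hFΘ : FmapA r Ψ ⊆ Θ)
    (hH : ∀ a c b : ℕ, 1 ≤ a → a < c → c < b → b ≤ r+1 →
      eA r a - eA r c ∈ Θ → eA r c - eA r b ∈ Θ → eA r a - eA r b ∈ Θ) :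
    ∀ g a b : ℕ, 1 ≤ a → a < b → b ≤ r+1 → b - a ≤ g → eA r a - eA r b ∈ Ψ →
      eA r a - eA r b ∈ Θ := by
  intro g
  induction g with
  | zero => intro a b h1 h2 h3 h4; omega
  | succ g ih =>
    intro a b h1 h2 h3 h4 hmem
    by_cases hF : eA r a - eA r b ∈ FmapA r Ψ
    · exact hFΘ hF
    · have halpha : alphaA r a (b-1) = eA r a - eA r b := alpha_eq a b (by omega)
      have hnc : ¬ ((∀ j' : ℕ, a ≤ j' → j' < b-1 → alphaA r a j' ∉ Ψ) ∧
          (∀ i' : ℕ, a < i' → i' ≤ b-1 → alphaA r i' (b-1) ∉ Ψ)) := by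
        intro ⟨c1, c2⟩
        exact hF ⟨a, b-1, h1, by omega, by omega, halpha.symm, hmem, c1, c2⟩
      rw [not_and_or] at hnc
      rcases hnc with hc | hc
      · push_neg at hc
        obtain ⟨j', hj1, hj2, hj3⟩ := hc
        set b' := j' + 1 with hb'
        have hmem1 : eA r a - eA r b' ∈ Ψ := by
          have : alphaA r a j' = eA r a - eA r b' := rfl
          rwa [this] at hj3
        have hmem2 : eA r b' - eA r b ∈ Ψ :=
          trans_edge hΨ ⟨by omega, by omega⟩ ⟨by omega, h3⟩ (by omega)
            (neg_edge hΨ hmem1) hmem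
        exact hH a b' b h1 (by omega) (by omega) h3
          (ih a b' h1 (by omega) (by omega) (by omega) hmem1)
          (ih b' b (by omega) (by omega) h3 (by omega) hmem2)
      · push_neg at hc
        obtain ⟨i', hi1, hi2, hi3⟩ := hc
        have hmem2 : eA r i' - eA r b ∈ Ψ := by
          rwa [alpha_eq i' b (by omega)] at hi3
        have hmem1 : eA r a - eA r i' ∈ Ψ :=
          trans_edge hΨ ⟨h1, by omega⟩ ⟨by omega, by omega⟩ (by omega)
            hmem (neg_edge hΨ hmem2)
        exact hH a i' b h1 (by omega) (by omega) h3
          (ih a i' h1 (by omega) (by omega) (by omega) hmem1)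
          (ih i' b (by omega) (by omega) h3 (by omega) hmem2)

/-- The edge relation of a subset `P` of the positive roots. -/
def Pedge (r : ℕ) (P : Set (Fin (r + 1) → ℚ)) (a b : ℕ) : Prop :=
  1 ≤ a ∧ a < b ∧ b ≤ r + 1 ∧ eA r a - eA r b ∈ P

def reach (r : ℕ) (P : Set (Fin (r + 1) → ℚ)) : ℕ → ℕ → Prop :=
  Relation.ReflTransGen (Pedge r P)

def conn (r : ℕ) (P : Set (Fin (r + 1) → ℚ)) : ℕ → ℕ → Prop :=
  Relation.ReflTransGen (fun x y => Pedge r P x y ∨ Pedge r P y x)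


lemma pedge_mem {a b : ℕ} (h : Pedge r P a b) : alphaA r a (b-1) ∈ P := by
  obtain ⟨h1, h2, h3, h4⟩ := h
  rw [alpha_eq a b (by omega)]; exact h4

lemma pedge_fun (hP : P ⊆ posA r) (hstar : starA r P) {a b b' : ℕ}
    (h1 : Pedge r P a b) (h2 : Pedge r P a b') : b = b' := by
  obtain ⟨ha1, hab, hb, hm⟩ := h1
  obtain ⟨_, hab', hb', hm'⟩ := h2
  by_cases hv : eA r a - eA r b = eA r a - eA r b'
  · exact (decode ⟨ha1, by omega⟩ ⟨by omega, hb⟩ ⟨ha1, by omega⟩ ⟨by omega, hb'⟩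
      (by omega) (by omega) hv).2
  · exfalso
    have := hstar a (b-1) a (b'-1) ha1 (by omega) (by omega) ha1 (by omega) (by omega)
      (pedge_mem ⟨ha1, hab, hb, hm⟩) (pedge_mem ⟨ha1, hab', hb', hm'⟩)
      (by rw [alpha_eq a b (by omega), alpha_eq a b' (by omega)]; exact hv)
    exact this.1 rfl

lemma pedge_inj (hP : P ⊆ posA r) (hstar : starA r P) {a a' b : ℕ}
    (h1 : Pedge r P a b) (h2 : Pedge r P a' b) : a = a' := by
  obtain ⟨ha1, hab, hb, hm⟩ := h1
  obtain ⟨ha1', hab', _, hm'⟩ := h2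
  by_cases hv : eA r a - eA r b = eA r a' - eA r b
  · exact (decode ⟨ha1, by omega⟩ ⟨by omega, hb⟩ ⟨ha1', by omega⟩ ⟨by omega, hb⟩
      (by omega) (by omega) hv).1
  · exfalso
    have := hstar a (b-1) a' (b-1) ha1 (by omega) (by omega) ha1' (by omega) (by omega)
      (pedge_mem ⟨ha1, hab, hb, hm⟩) (pedge_mem ⟨ha1', hab', hb, hm'⟩)
      (by rw [alpha_eq a b (by omega), alpha_eq a' b (by omega)]; exact hv)
    exact this.2 rfl

lemma reach_le {a b : ℕ} (h : reach r P a b) : a ≤ b := by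
  induction h with
  | refl => exact le_rfl
  | tail h1 h2 ih => have := h2.2.1; omega

lemma conn_symm : Symmetric (conn r P) :=
  by
    haveI : Std.Symm (fun x y : ℕ => Pedge r P x y ∨ Pedge r P y x) := ⟨fun x y h => h.symm⟩
    exact fun x y h => Std.Symm.symm
      (r := Relation.ReflTransGen (fun x y : ℕ => Pedge r P x y ∨ Pedge r P y x)) x y h

lemma conn_cases (hP : P ⊆ posA r) (hstar : starA r P) {a b : ℕ} (h : conn r P a b) :
    reach r P a b ∨ reach r P b a := by
  induction h with
  | refl => exact Or.inl Relation.ReflTransGen.refl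
  | @tail c b h1 h2 ih =>
    rcases ih with hac | hca
    · rcases h2 with hcb | hbc
      · exact Or.inl (hac.tail hcb)
      · rcases (Relation.ReflTransGen.cases_tail hac) with heq | ⟨d, had, hdc⟩
        · exact Or.inr (Relation.ReflTransGen.single hbc |>.trans (heq ▸ Relation.ReflTransGen.refl))
        · have : d = b := pedge_inj hP hstar hdc hbc
          exact Or.inl (this ▸ had)
    · rcases h2 with hcb | hbc
      · rcases (Relation.ReflTransGen.cases_head hca) with heq | ⟨d, hcd, hda⟩
        · exact Or.inl (heq ▸ Relation.ReflTransGen.single hcb)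
        · have : d = b := pedge_fun hP hstar hcd hcb
          exact Or.inr (this ▸ hda)
      · exact Or.inr (Relation.ReflTransGen.head hbc hca)

/-- telescoping along a reach path into a closed subsystem containing `P`. -/
lemma reach_mem {Θ : Set (Fin (r + 1) → ℚ)} (hΘ : IsClosedSub (rootsA r) Θ) (hPΘ : P ⊆ Θ)
    {a b : ℕ} (h : reach r P a b) (hab : a ≠ b) : eA r a - eA r b ∈ Θ := by
  induction h with
  | refl => exact absurd rfl hab
  | @tail c b h1 h2 ih =>
    by_cases hac : a = c
    · subst hac; exact hPΘ h2.2.2.2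
    · have hac' := reach_le h1
      have hcb := h2.2.1
      have hbr := h2.2.2.1
      have m1 := ih hac
      have m2 : eA r c - eA r b ∈ Θ := hPΘ h2.2.2.2
      have h1a : 1 ≤ a := by
        rcases (Relation.ReflTransGen.cases_head h1) with heq | ⟨d, had, _⟩
        · omega
        · exact had.1
      have := hΘ.2.2 _ m1 _ m2 (by
        rw [sub_add_sub_cancel]
        exact mem_rootsA ⟨h1a, by omega⟩ ⟨by omega, h2.2.2.1⟩ (by omega))
      rwa [sub_add_sub_cancel] at this

/-- The connectivity closure of `P`. -/
def clP (r : ℕ) (P : Set (Fin (r + 1) → ℚ)) : Set (Fin (r + 1) → ℚ) :=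
  {v | ∃ a b : ℕ, 1 ≤ a ∧ a ≤ r+1 ∧ 1 ≤ b ∧ b ≤ r+1 ∧ a ≠ b ∧ v = eA r a - eA r b ∧
    conn r P a b}


lemma P_subset_clP (hP : P ⊆ posA r) : P ⊆ clP r P := by
  intro v hv
  obtain ⟨i, j, hi, hij, hjr, hveq⟩ := hP hv
  refine ⟨i, j+1, hi, by omega, by omega, by omega, by omega, ?_, ?_⟩
  · rw [hveq]; rfl
  · exact Relation.ReflTransGen.single (Or.inl ⟨hi, by omega, by omega, by
      have : eA r i - eA r (j+1) = alphaA r i j := rfl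
      rw [this, ← hveq]; exact hv⟩)

lemma clP_closed (hP : P ⊆ posA r) : IsClosedSub (rootsA r) (clP r P) := by
  refine ⟨?_, ?_, ?_⟩
  · rintro v ⟨a, b, h1, h2, h3, h4, h5, h6, h7⟩
    exact h6 ▸ mem_rootsA ⟨h1, h2⟩ ⟨h3, h4⟩ h5
  · rintro v ⟨a, b, h1, h2, h3, h4, h5, h6, h7⟩
    exact ⟨b, a, h3, h4, h1, h2, Ne.symm h5, by rw [h6, neg_sub], conn_symm h7⟩
  · rintro l ⟨a, b, ha1, ha2, hb1, hb2, hab, hleq, hcab⟩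
      m ⟨c, d, hc1, hc2, hd1, hd2, hcd, hmeq, hccd⟩ hsum
    obtain ⟨i, j, hi1, hi2, hj1, hj2, hij, hsumeq⟩ := hsum
    subst hleq hmeq
    rcases sum_decode ⟨ha1, ha2⟩ ⟨hb1, hb2⟩ ⟨hc1, hc2⟩ ⟨hd1, hd2⟩ ⟨hi1, hi2⟩ ⟨hj1, hj2⟩
      hab hcd hij hsumeq with ⟨hbc, hia, hjd⟩ | ⟨had, hic, hjb⟩
    · subst hbc
      exact ⟨a, d, ha1, ha2, hd1, hd2, by omega, by rw [hsumeq, hia, hjd], hcab.trans hccd⟩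
    · subst had
      exact ⟨c, b, hc1, hc2, hb1, hb2, by omega, by rw [hsumeq, hic, hjb],
        hccd.trans hcab⟩

lemma GmapA_eq_clP (hP : P ⊆ posA r) (hstar : starA r P) : GmapA r P = clP r P := by
  apply le_antisymm
  · exact Set.sInter_subset_of_mem ⟨clP_closed hP, P_subset_clP hP⟩
  · rintro v ⟨a, b, h1, h2, h3, h4, h5, h6, h7⟩
    intro Θ hΘ
    obtain ⟨hΘc, hPΘ⟩ := hΘ
    rcases conn_cases hP hstar h7 with hr | hr
    · exact h6 ▸ reach_mem hΘc hPΘ hr h5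
    · have := reach_mem hΘc hPΘ hr (Ne.symm h5)
      have := hΘc.2.1 _ this
      rwa [neg_sub, ← h6] at this

lemma F_GmapA (hP : P ⊆ posA r) (hstar : starA r P) : FmapA r (GmapA r P) = P := by
  rw [GmapA_eq_clP hP hstar]
  apply le_antisymm
  · rintro v ⟨i, j, hi, hij, hjr, hveq, hvmem, hcond1, hcond2⟩
    obtain ⟨a, b, h1, h2, h3, h4, h5, h6, h7⟩ := hvmem
    have hv' : eA r i - eA r (j+1) = eA r a - eA r b := by rw [← h6, hveq]; rfl
    obtain ⟨hia, hjb⟩ := decode ⟨hi, by omega⟩ ⟨by omega, by omega⟩ ⟨h1, h2⟩ ⟨h3, h4⟩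
      (by omega) h5 hv'
    subst hia; subst hjb
    rcases conn_cases hP hstar h7 with hre | hre
    · rcases Relation.ReflTransGen.cases_head hre with heq | ⟨c, hic, hcb⟩
      · omega
      · have hcle : c ≤ j + 1 := reach_le hcb
        have hic2 := hic.2.1
        by_cases hcj : c = j + 1
        · subst hcj
          rw [hveq]
          show alphaA r i j ∈ P
          exact hic.2.2.2
        · exfalso
          refine hcond1 (c-1) (by omega) (by omega) ?_
          refine ⟨i, c, hi, by omega, by omega, by omega, by omega,
            alpha_eq i c (by omega), Relation.ReflTransGen.single (Or.inl hic)⟩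
    · have := reach_le hre
      omega
  · intro v hv
    obtain ⟨i, j, hi, hij, hjr, hveq⟩ := hP hv
    have hvP : Pedge r P i (j+1) := ⟨hi, by omega, by omega, by
      have : eA r i - eA r (j+1) = alphaA r i j := rfl
      rw [this, ← hveq]; exact hv⟩
    refine ⟨i, j, hi, hij, hjr, hveq, P_subset_clP hP hv, ?_, ?_⟩
    · intro j' h1 h2 hmem
      obtain ⟨a, b, ha1, ha2, hb1, hb2, hab, heq, hconn⟩ := hmem
      have heq' : eA r i - eA r (j'+1) = eA r a - eA r b := heq
      obtain ⟨hia, hjb⟩ := decode ⟨hi, by omega⟩ ⟨by omega, by omega⟩ ⟨ha1, ha2⟩ ⟨hb1, hb2⟩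
        (by omega) hab heq'
      subst hia; subst hjb
      rcases conn_cases hP hstar hconn with hre | hre
      · rcases Relation.ReflTransGen.cases_head hre with heq2 | ⟨c, hic, hcb⟩
        · omega
        · have : c = j + 1 := pedge_fun hP hstar hic hvP
          subst this
          have := reach_le hcb
          omega
      · have := reach_le hre
        omega
    · intro i' h1 h2 hmem
      obtain ⟨a, b, ha1, ha2, hb1, hb2, hab, heq, hconn⟩ := hmem
      have heq' : eA r i' - eA r (j+1) = eA r a - eA r b := heq
      obtain ⟨hia, hjb⟩ := decode ⟨by omega, by omega⟩ ⟨by omega, by omega⟩ ⟨ha1, ha2⟩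
        ⟨hb1, hb2⟩ (by omega) hab heq'
      subst hia; subst hjb
      rcases conn_cases hP hstar hconn with hre | hre
      · rcases Relation.ReflTransGen.cases_tail hre with heq2 | ⟨d, hid, hd⟩
        · omega
        · have : d = i := pedge_inj hP hstar hd hvP
          subst this
          have := reach_le hid
          omega
      · have := reach_le hre
        omega

lemma alpha_decode {i j i' j' : ℕ} (hi : 1 ≤ i) (hij : i ≤ j) (hj : j ≤ r)
    (hi' : 1 ≤ i') (hij' : i' ≤ j') (hj' : j' ≤ r)
    (h : alphaA r i j = alphaA r i' j') : i = i' ∧ j = j' := by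
  have h' : eA r i - eA r (j+1) = eA r i' - eA r (j'+1) := h
  have := decode (r := r) ⟨hi, by omega⟩ ⟨by omega, by omega⟩ ⟨hi', by omega⟩
    ⟨by omega, by omega⟩ (by omega) (by omega) h'
  omega

lemma F_elim {v : Fin (r+1) → ℚ} {i j : ℕ} (hi : 1 ≤ i) (hij : i ≤ j) (hj : j ≤ r)
    (hveq : v = alphaA r i j) (hv : v ∈ FmapA r Ψ) :
    (∀ j' : ℕ, i ≤ j' → j' < j → alphaA r i j' ∉ Ψ) ∧
    (∀ i' : ℕ, i < i' → i' ≤ j → alphaA r i' j ∉ Ψ) := by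
  obtain ⟨i0, j0, h1, h2, h3, h4, h5, c1, c2⟩ := hv
  have := alpha_decode h1 h2 h3 hi hij hj (by rw [← h4, ← hveq])
  obtain ⟨rfl, rfl⟩ := this
  exact ⟨c1, c2⟩

lemma F_mem (hΨ : IsClosedSub (rootsA r) Ψ) {v : Fin (r+1) → ℚ} (hv : v ∈ FmapA r Ψ) :
    v ∈ Ψ := by
  obtain ⟨i, j, h1, h2, h3, h4, h5, _, _⟩ := hv; exact h5

lemma star_F (hΨ : IsClosedSub (rootsA r) Ψ) : starA r (FmapA r Ψ) := by
  intro i j i' j' hi hij hj hi' hij' hj' hm hm' hne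
  have c := F_elim hi hij hj rfl hm
  have c' := F_elim hi' hij' hj' rfl hm'
  constructor
  · intro hii
    subst hii
    have hjj : j ≠ j' := by
      intro hjj; subst hjj; exact hne rfl
    rcases Nat.lt_or_ge j j' with hlt | hge
    · exact c'.1 j hij hlt (F_mem hΨ hm)
    · exact c.1 j' hij' (by omega) (F_mem hΨ hm')
  · intro hjj
    subst hjj
    have hii : i ≠ i' := by
      intro hii; subst hii; exact hne rfl
    rcases Nat.lt_or_ge i i' with hlt | hge
    · exact c.2 i' hlt hij' (F_mem hΨ hm')
    · exact c'.2 i (by omega) hij (F_mem hΨ hm)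

/-- Linear independence of increasing "edge vectors" with distinct upper entries. -/
lemma indep_aux : ∀ (n : ℕ) (s : Finset (ℕ × ℕ)), s.card = n →
    (∀ p ∈ s, 1 ≤ p.1 ∧ p.1 < p.2 ∧ p.2 ≤ r+1) →
    (∀ p ∈ s, ∀ q ∈ s, p.2 = q.2 → p = q) →
    LinearIndependent ℚ
      (fun v : (↑(s.image fun p : ℕ × ℕ => eA r p.1 - eA r p.2) : Set (Fin (r+1) → ℚ)) =>
        (v : Fin (r+1) → ℚ)) := by
  intro n
  induction n with
  | zero =>
    intro s hcard _ _
    rw [Finset.card_eq_zero] at hcard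
    subst hcard
    rw [Finset.image_empty]
    have he : ((↑(∅ : Finset (Fin (r+1) → ℚ)) : Set (Fin (r+1) → ℚ))) = (∅ : Set _) :=
      Finset.coe_empty
    rw [he]
    exact linearIndependent_empty ℚ (Fin (r+1) → ℚ)
  | succ n ih =>
    intro s hcard hbnd hinj
    have hne : s.Nonempty := by
      rw [← Finset.card_pos, hcard]; omega
    obtain ⟨p, hp, hmax⟩ := Finset.exists_max_image s Prod.snd hne
    set s' := s.erase p with hs'
    have hcard' : s'.card = n := by
      rw [hs', Finset.card_erase_of_mem hp, hcard]; rfl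
    have hbnd' : ∀ q ∈ s', 1 ≤ q.1 ∧ q.1 < q.2 ∧ q.2 ≤ r+1 :=
      fun q hq => hbnd q (Finset.mem_of_mem_erase hq)
    have hinj' : ∀ q ∈ s', ∀ q' ∈ s', q.2 = q'.2 → q = q' :=
      fun q hq q' hq' => hinj q (Finset.mem_of_mem_erase hq) q' (Finset.mem_of_mem_erase hq')
    have hI := ih s' hcard' hbnd' hinj'
    have hbp := hbnd p hp
    -- the evaluation coordinate
    have hpt : p.2 - 1 < r + 1 := by omega
    set t : Fin (r+1) := ⟨p.2 - 1, hpt⟩ with ht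
    have hvanish : ∀ w ∈ (↑(s'.image fun q : ℕ × ℕ => eA r q.1 - eA r q.2) :
        Set (Fin (r+1) → ℚ)), w t = 0 := by
      rintro w hw
      rw [Finset.mem_coe, Finset.mem_image] at hw
      obtain ⟨q, hq, rfl⟩ := hw
      have hbq := hbnd' q hq
      have hq2 : q.2 ≠ p.2 := by
        intro hqq
        exact Finset.ne_of_mem_erase hq (hinj q (Finset.mem_of_mem_erase hq) p hp hqq)
      have hq2le : q.2 ≤ p.2 := hmax q (Finset.mem_of_mem_erase hq)
      show eA r q.1 t - eA r q.2 t = 0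
      unfold eA
      rw [ht]
      simp only
      rw [if_neg (by omega), if_neg (by omega)]
      ring
    have hnotin : (eA r p.1 - eA r p.2) ∉ Submodule.span ℚ
        (↑(s'.image fun q : ℕ × ℕ => eA r q.1 - eA r q.2) : Set (Fin (r+1) → ℚ)) := by
      intro hmem
      have hker : Submodule.span ℚ
          (↑(s'.image fun q : ℕ × ℕ => eA r q.1 - eA r q.2) : Set (Fin (r+1) → ℚ)) ≤
          LinearMap.ker (LinearMap.proj t : (Fin (r+1) → ℚ) →ₗ[ℚ] ℚ) := by
        rw [Submodule.span_le]
        intro w hw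
        exact hvanish w hw
      have := hker hmem
      rw [LinearMap.mem_ker] at this
      have hval : (eA r p.1 - eA r p.2) t = -1 := by
        show eA r p.1 t - eA r p.2 t = -1
        unfold eA
        rw [ht]
        simp only
        rw [if_neg (by omega), if_pos (by omega)]
        ring
      rw [show (LinearMap.proj t : (Fin (r+1) → ℚ) →ₗ[ℚ] ℚ) (eA r p.1 - eA r p.2)
        = (eA r p.1 - eA r p.2) t from rfl, hval] at this
      norm_num at this
    have hset : (↑(s.image fun q : ℕ × ℕ => eA r q.1 - eA r q.2) : Set (Fin (r+1) → ℚ))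
        = insert (eA r p.1 - eA r p.2)
          (↑(s'.image fun q : ℕ × ℕ => eA r q.1 - eA r q.2) : Set (Fin (r+1) → ℚ)) := by
      conv_lhs => rw [← Finset.insert_erase hp]
      rw [Finset.image_insert, Finset.coe_insert, ← hs']
    rw [hset]
    exact linearIndependent_subtype_iff.mpr
      ((linearIndependent_subtype_iff.mp hI).insert (by rwa [Set.image_id]))

lemma F_subset (hΨ : IsClosedSub (rootsA r) Ψ) : FmapA r Ψ ⊆ Ψ := by
  rintro v ⟨i, j, h1, h2, h3, h4, h5, _, _⟩; exact h5

lemma span_F (hΨ : IsClosedSub (rootsA r) Ψ) :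
    Submodule.span ℚ Ψ = Submodule.span ℚ (FmapA r Ψ) := by
  apply le_antisymm
  · rw [Submodule.span_le]
    intro v hv
    obtain ⟨a, b, ha1, ha2, hb1, hb2, hab, hveq⟩ := hΨ.1 hv
    subst hveq
    have hH : ∀ a c b : ℕ, 1 ≤ a → a < c → c < b → b ≤ r+1 →
        eA r a - eA r c ∈ (Submodule.span ℚ (FmapA r Ψ) : Set (Fin (r+1) → ℚ)) →
        eA r c - eA r b ∈ (Submodule.span ℚ (FmapA r Ψ) : Set (Fin (r+1) → ℚ)) →
        eA r a - eA r b ∈ (Submodule.span ℚ (FmapA r Ψ) : Set (Fin (r+1) → ℚ)) := by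
      intro a c b _ _ _ _ m1 m2
      have := Submodule.add_mem _ m1 m2
      rwa [sub_add_sub_cancel] at this
    rcases Nat.lt_or_ge a b with hlt | hge
    · exact tele hΨ _ Submodule.subset_span hH (b-a) a b ha1 hlt hb2 le_rfl hv
    · have hlt : b < a := by omega
      have hv' : eA r b - eA r a ∈ Ψ := neg_edge hΨ hv
      have := tele hΨ _ Submodule.subset_span hH (a-b) b a hb1 hlt ha2 le_rfl hv'
      have := Submodule.neg_mem _ this
      rwa [neg_sub] at this
  · exact Submodule.span_mono (F_subset hΨ)

lemma GF (hΨ : IsClosedSub (rootsA r) Ψ) : GmapA r (FmapA r Ψ) = Ψ := by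
  apply le_antisymm
  · exact Set.sInter_subset_of_mem ⟨hΨ, F_subset hΨ⟩
  · intro v hv Θ hΘmem
    obtain ⟨hΘ, hFΘ⟩ := hΘmem
    obtain ⟨a, b, ha1, ha2, hb1, hb2, hab, hveq⟩ := hΨ.1 hv
    subst hveq
    have hH : ∀ a c b : ℕ, 1 ≤ a → a < c → c < b → b ≤ r+1 →
        eA r a - eA r c ∈ Θ → eA r c - eA r b ∈ Θ → eA r a - eA r b ∈ Θ := by
      intro a c b h1 h2 h3 h4 m1 m2
      have := hΘ.2.2 _ m1 _ m2 (by
        rw [sub_add_sub_cancel]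
        exact mem_rootsA ⟨h1, by omega⟩ ⟨by omega, h4⟩ (by omega))
      rwa [sub_add_sub_cancel] at this
    rcases Nat.lt_or_ge a b with hlt | hge
    · exact tele hΨ _ hFΘ hH (b-a) a b ha1 hlt hb2 le_rfl hv
    · have hlt : b < a := by omega
      have hv' : eA r b - eA r a ∈ Ψ := neg_edge hΨ hv
      have := tele hΨ _ hFΘ hH (a-b) b a hb1 hlt ha2 le_rfl hv'
      have := hΘ.2.1 _ this
      rwa [neg_sub] at this

/-- The functional summing coordinates over the `Ψ`-class of `a`. -/
lemma f_eA (c : Fin (r+1) → Prop) [DecidablePred c] {x : ℕ} (hx : 1 ≤ x ∧ x ≤ r+1) :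
    (∑ t : Fin (r+1), if c t then (LinearMap.proj t : (Fin (r+1) → ℚ) →ₗ[ℚ] ℚ) else 0)
      (eA r x) = if c (pt r x hx) then 1 else 0 := by
  rw [LinearMap.sum_apply]
  rw [Finset.sum_eq_single (pt r x hx)]
  · by_cases h : c (pt r x hx)
    · rw [if_pos h, if_pos h]
      show eA r x (pt r x hx) = 1
      rw [eA_pt x x hx, if_pos rfl]
    · rw [if_neg h, if_neg h]; rfl
  · intro t _ ht
    by_cases h : c t
    · rw [if_pos h]
      show eA r x t = 0
      unfold eA
      rw [if_neg]
      intro hc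
      apply ht
      unfold pt
      apply Fin.ext
      simp only
      omega
    · rw [if_neg h]; rfl
  · intro h; exact absurd (Finset.mem_univ _) h

lemma span_mem_imp (hΨ : IsClosedSub (rootsA r) Ψ) {a b : ℕ}
    (ha : 1 ≤ a ∧ a ≤ r+1) (hb : 1 ≤ b ∧ b ≤ r+1) (hab : a ≠ b)
    (h : eA r a - eA r b ∈ Submodule.span ℚ Ψ) : eA r a - eA r b ∈ Ψ := by
  classical
  set c : Fin (r+1) → Prop := fun t => (t : ℕ) + 1 = a ∨ eA r a - eA r ((t : ℕ)+1) ∈ Ψ with hc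
  set f : (Fin (r+1) → ℚ) →ₗ[ℚ] ℚ :=
    ∑ t : Fin (r+1), if c t then (LinearMap.proj t : (Fin (r+1) → ℚ) →ₗ[ℚ] ℚ) else 0 with hf
  have hker : ∀ w ∈ Ψ, f w = 0 := by
    intro w hw
    obtain ⟨x, y, hx1, hx2, hy1, hy2, hxy, hweq⟩ := hΨ.1 hw
    subst hweq
    rw [map_sub, hf, f_eA c ⟨hx1, hx2⟩, f_eA c ⟨hy1, hy2⟩]
    have hcx : c (pt r x ⟨hx1, hx2⟩) ↔ (x = a ∨ eA r a - eA r x ∈ Ψ) := by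
      unfold pt; rw [hc]; simp only
      constructor
      · rintro (h1 | h1)
        · left; omega
        · right
          have : x - 1 + 1 = x := by omega
          rwa [this] at h1
      · rintro (h1 | h1)
        · left; omega
        · right
          have : x - 1 + 1 = x := by omega
          rwa [this]
    have hcy : c (pt r y ⟨hy1, hy2⟩) ↔ (y = a ∨ eA r a - eA r y ∈ Ψ) := by
      unfold pt; rw [hc]; simp only
      constructor
      · rintro (h1 | h1)
        · left; omega
        · right
          have : y - 1 + 1 = y := by omega
          rwa [this] at h1
      · rintro (h1 | h1)
        · left; omega
        · right
          have : y - 1 + 1 = y := by omega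
          rwa [this]
    have hiff : (x = a ∨ eA r a - eA r x ∈ Ψ) ↔ (y = a ∨ eA r a - eA r y ∈ Ψ) := by
      constructor
      · rintro (h1 | h1)
        · subst h1
          right; exact hw
        · by_cases hya : y = a
          · left; exact hya
          · right; exact trans_edge hΨ ha ⟨hy1, hy2⟩ (Ne.symm hya) h1 hw
      · rintro (h1 | h1)
        · subst h1
          right; exact neg_edge hΨ hw
        · by_cases hxa : x = a
          · left; exact hxa
          · right; exact trans_edge hΨ ha ⟨hx1, hx2⟩ (Ne.symm hxa) h1 (neg_edge hΨ hw)
    by_cases h1 : x = a ∨ eA r a - eA r x ∈ Ψ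
    · rw [if_pos (hcx.mpr h1), if_pos (hcy.mpr (hiff.mp h1))]; ring
    · rw [if_neg (fun hh => h1 (hcx.mp hh)), if_neg (fun hh => h1 (hiff.mpr (hcy.mp hh)))]
      ring
  have hspan : ∀ w ∈ Submodule.span ℚ Ψ, f w = 0 := by
    intro w hw
    have : Submodule.span ℚ Ψ ≤ LinearMap.ker f := by
      rw [Submodule.span_le]
      intro u hu
      exact hker u hu
    exact this hw
  have h0 := hspan _ h
  rw [map_sub, hf, f_eA c ha, f_eA c hb] at h0
  have hca : c (pt r a ha) := by
    unfold pt; rw [hc]; left; simp only; omega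
  rw [if_pos hca] at h0
  by_cases hcb : c (pt r b hb)
  · rw [hc] at hcb
    unfold pt at hcb
    simp only at hcb
    rcases hcb with h1 | h1
    · omega
    · have : b - 1 + 1 = b := by omega
      rwa [this] at h1
  · rw [if_neg hcb] at h0
    norm_num at h0

lemma subset_rank_eq {Ψ' : Set (Fin (r + 1) → ℚ)} (hΨ : IsClosedSub (rootsA r) Ψ)
    (hΨ' : IsClosedSub (rootsA r) Ψ') (hsub : Ψ ⊆ Ψ') (hrk : rankOf Ψ' = rankOf Ψ) :
    Ψ' = Ψ := by
  have hle : Submodule.span ℚ Ψ ≤ Submodule.span ℚ Ψ' := Submodule.span_mono hsub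
  have heq : Submodule.span ℚ Ψ = Submodule.span ℚ Ψ' :=
    Submodule.eq_of_le_of_finrank_le hle (le_of_eq hrk)
  apply Set.Subset.antisymm _ hsub
  intro v hv
  obtain ⟨a, b, ha1, ha2, hb1, hb2, hab, hveq⟩ := hΨ'.1 hv
  subst hveq
  apply span_mem_imp hΨ ⟨ha1, ha2⟩ ⟨hb1, hb2⟩ hab
  rw [heq]
  exact Submodule.subset_span hv

lemma rank_eq (hΨ : IsClosedSub (rootsA r) Ψ) : rankOf Ψ = (FmapA r Ψ).ncard := by
  classical
  set T : Finset (ℕ × ℕ) := ((Finset.range (r+2)) ×ˢ (Finset.range (r+2))).filter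
    (fun p => 1 ≤ p.1 ∧ p.1 < p.2 ∧ p.2 ≤ r+1 ∧ eA r p.1 - eA r p.2 ∈ FmapA r Ψ) with hT
  have hset : (↑(T.image fun p : ℕ × ℕ => eA r p.1 - eA r p.2) : Set (Fin (r+1) → ℚ))
      = FmapA r Ψ := by
    apply Set.Subset.antisymm
    · intro v hv
      rw [Finset.mem_coe, Finset.mem_image] at hv
      obtain ⟨p, hp, rfl⟩ := hv
      rw [hT, Finset.mem_filter] at hp
      exact hp.2.2.2.2
    · intro v hv
      obtain ⟨i, j, h1, h2, h3, h4, h5, c1, c2⟩ := hv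
      rw [Finset.mem_coe, Finset.mem_image]
      refine ⟨(i, j+1), ?_, ?_⟩
      · rw [hT, Finset.mem_filter, Finset.mem_product]
        refine ⟨⟨Finset.mem_range.mpr (by omega), Finset.mem_range.mpr (by omega)⟩,
          h1, by omega, by omega, ?_⟩
        show eA r i - eA r (j+1) ∈ FmapA r Ψ
        have : eA r i - eA r (j+1) = alphaA r i j := rfl
        rw [this, ← h4]
        exact ⟨i, j, h1, h2, h3, h4, h5, c1, c2⟩
      · show eA r i - eA r (j+1) = v
        rw [h4]; rfl
  have hbnd : ∀ p ∈ T, 1 ≤ p.1 ∧ p.1 < p.2 ∧ p.2 ≤ r+1 := by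
    intro p hp
    rw [hT, Finset.mem_filter] at hp
    exact ⟨hp.2.1, hp.2.2.1, hp.2.2.2.1⟩
  have hinj : ∀ p ∈ T, ∀ q ∈ T, p.2 = q.2 → p = q := by
    intro p hp q hq hpq
    rw [hT, Finset.mem_filter] at hp hq
    obtain ⟨-, hp1, hp2, hp3, hp4⟩ := hp
    obtain ⟨-, hq1, hq2, hq3, hq4⟩ := hq
    rw [← alpha_eq p.1 p.2 (by omega)] at hp4
    rw [← alpha_eq q.1 q.2 (by omega)] at hq4
    by_cases hv : alphaA r p.1 (p.2 - 1) = alphaA r q.1 (q.2 - 1)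
    · have := alpha_decode (r := r) hp1 (by omega) (by omega) hq1 (by omega) (by omega) hv
      exact Prod.ext this.1 (by omega)
    · exfalso
      have := star_F hΨ p.1 (p.2-1) q.1 (q.2-1) hp1 (by omega) (by omega) hq1 (by omega)
        (by omega) hp4 hq4 hv
      omega
  have hLI := indep_aux T.card T rfl hbnd hinj
  have hrank := finrank_span_set_eq_card
    (s := (↑(T.image fun p : ℕ × ℕ => eA r p.1 - eA r p.2) : Set (Fin (r+1) → ℚ))) hLI
  rw [Finset.toFinset_coe] at hrank
  unfold rankOf
  rw [span_F hΨ, ← hset, hrank, ← Set.ncard_coe_finset]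

end Aux

open Aux
theorem statement18 (r k : ℕ) (hr : 1 ≤ r) (hk : k ≤ r) :
    Set.BijOn (FmapA r)
      {Ψ : Set (Fin (r + 1) → ℚ) | IsMaxClosedOfRank (rootsA r) Ψ (r - k)}
      {P : Set (Fin (r + 1) → ℚ) | P ⊆ posA r ∧ P.ncard = r - k ∧ starA r P} ∧
    Set.InvOn (GmapA r) (FmapA r)
      {Ψ : Set (Fin (r + 1) → ℚ) | IsMaxClosedOfRank (rootsA r) Ψ (r - k)}
      {P : Set (Fin (r + 1) → ℚ) | P ⊆ posA r ∧ P.ncard = r - k ∧ starA r P} := by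
  have hmemG : ∀ P : Set (Fin (r + 1) → ℚ), P ⊆ posA r → P.ncard = r - k → starA r P →
      IsMaxClosedOfRank (rootsA r) (GmapA r P) (r - k) := by
    intro P hPpos hPcard hPstar
    have hGcl : IsClosedSub (rootsA r) (GmapA r P) := by
      rw [GmapA_eq_clP hPpos hPstar]
      exact clP_closed hPpos
    have hFG : FmapA r (GmapA r P) = P := F_GmapA hPpos hPstar
    have hGrk : rankOf (GmapA r P) = r - k := by
      rw [rank_eq hGcl, hFG, hPcard]
    refine ⟨hGcl, hGrk, ?_⟩
    intro Ψ' hΨ' hrk' hsub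
    exact subset_rank_eq hGcl hΨ' hsub (by rw [hrk', hGrk])
  constructor
  · refine ⟨?_, ?_, ?_⟩
    · intro Ψ hΨ
      obtain ⟨hcl, hrk, _⟩ := hΨ
      refine ⟨?_, ?_, star_F hcl⟩
      · rintro v ⟨i, j, h1, h2, h3, h4, _⟩
        exact ⟨i, j, h1, h2, h3, h4⟩
      · rw [← rank_eq hcl, hrk]
    · intro Ψ1 h1 Ψ2 h2 heq
      calc Ψ1 = GmapA r (FmapA r Ψ1) := (GF h1.1).symm
      _ = GmapA r (FmapA r Ψ2) := by rw [heq]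
      _ = Ψ2 := GF h2.1
    · intro P hP
      obtain ⟨hPpos, hPcard, hPstar⟩ := hP
      exact ⟨GmapA r P, hmemG P hPpos hPcard hPstar, F_GmapA hPpos hPstar⟩
  · exact ⟨fun Ψ hΨ => GF hΨ.1, fun P hP => F_GmapA hP.1 hP.2.2⟩
end
end

section
/- For every integer k with 0 ≤ k ≤ r, the assignment Ψ ↦ F(Ψ) is a bijection from the set of maximal closed root subsystems of Φ of rank r − k onto the set of subsets P ⊆ Φ⁺ of cardinality r − k satisfying condition (⋆), and its inverse is P ↦ G(P) := Span_ℚ(P) ∩ Φ. -/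
open scoped Classical
noncomputable section

/-- The (1-based) standard basis vector `e_i` of `ℚ^r`. -/
def eB (r : ℕ) (i : ℕ) : Fin r → ℚ := fun t => if (t : ℕ) + 1 = i then 1 else 0

/-- The root system of type `B_r`. -/
def rootsB (r : ℕ) : Set (Fin r → ℚ) :=
  {v | ∃ i j : ℕ, 1 ≤ i ∧ i < j ∧ j ≤ r ∧
      (v = eB r i - eB r j ∨ v = eB r j - eB r i ∨
        v = eB r i + eB r j ∨ v = -(eB r i + eB r j))} ∪
    {v | ∃ i : ℕ, 1 ≤ i ∧ i ≤ r ∧ (v = eB r i ∨ v = -eB r i)}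

/-- The positive roots of type `B_r`. -/
def posB (r : ℕ) : Set (Fin r → ℚ) :=
  {v | ∃ i j : ℕ, 1 ≤ i ∧ i < j ∧ j ≤ r ∧ (v = eB r i - eB r j ∨ v = eB r i + eB r j)} ∪
    {v | ∃ i : ℕ, 1 ≤ i ∧ i ≤ r ∧ v = eB r i}

/-- `e_i + e_j`, interpreted as `e_i` when `i = j`. -/
def pB (r i j : ℕ) : Fin r → ℚ := if i = j then eB r i else eB r i + eB r j

/-- `e_i − e_j`, interpreted as `e_i` when `i = j`. -/
def mB (r i j : ℕ) : Fin r → ℚ := if i = j then eB r i else eB r i - eB r j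

/-- `F(Ψ)` for type `B`. -/
def FmapB (r : ℕ) (Ψ : Set (Fin r → ℚ)) : Set (Fin r → ℚ) :=
  {v | ∃ i j : ℕ, 1 ≤ i ∧ i < j ∧ j ≤ r ∧
      (v = eB r i + eB r j ∨ v = eB r i - eB r j) ∧ v ∈ Ψ ∧
      (∀ j' : ℕ, i ≤ j' → j' < j → pB r i j' ∉ Ψ ∧ mB r i j' ∉ Ψ) ∧
      ∀ i' : ℕ, i < i' → i' ≤ j → pB r i' j ∉ Ψ ∧ mB r i' j ∉ Ψ} ∪
    {v | ∃ i : ℕ, 1 ≤ i ∧ i ≤ r ∧ v = eB r i ∧ eB r i ∈ Ψ}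

/-- The index pair `p(β) = (i, j)` of a positive root `β` of type `B_r`:
`p(e_i ± e_j) = (i, j)` for `i < j` and `p(e_i) = (i, i)`. -/
def idxB (r : ℕ) (v : Fin r → ℚ) (i j : ℕ) : Prop :=
  (1 ≤ i ∧ i < j ∧ j ≤ r ∧ (v = eB r i + eB r j ∨ v = eB r i - eB r j)) ∨
    (1 ≤ i ∧ i = j ∧ j ≤ r ∧ v = eB r i)

/-- Condition (⋆) for type `B`: any two distinct elements `β, β′` of `P`, with index
pairs `p(β) = (i, j)` and `p(β′) = (i′, j′)`, satisfy `i ≠ i′` and `j ≠ j′`. -/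
def starB (r : ℕ) (P : Set (Fin r → ℚ)) : Prop :=
  ∀ v ∈ P, ∀ v' ∈ P, v ≠ v' → ∀ i j i' j' : ℕ,
    idxB r v i j → idxB r v' i' j' → i ≠ i' ∧ j ≠ j'

/-- `G(P) = Span_ℚ(P) ∩ Φ`. -/
def GmapB (r : ℕ) (P : Set (Fin r → ℚ)) : Set (Fin r → ℚ) :=
  (Submodule.span ℚ P : Set (Fin r → ℚ)) ∩ rootsB r


namespace St19

/-- The `a`-th coordinate (1-based) of a vector. -/
def coord (r : ℕ) (v : Fin r → ℚ) (a : ℕ) : ℚ :=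
  if h : 1 ≤ a ∧ a ≤ r then v ⟨a - 1, by omega⟩ else 0

variable {r : ℕ}

lemma coord_add (v w : Fin r → ℚ) (a : ℕ) : coord r (v + w) a = coord r v a + coord r w a := by
  unfold coord; split <;> simp

lemma coord_smul (c : ℚ) (v : Fin r → ℚ) (a : ℕ) : coord r (c • v) a = c * coord r v a := by
  unfold coord; split <;> simp

lemma coord_neg (v : Fin r → ℚ) (a : ℕ) : coord r (-v) a = - coord r v a := by
  unfold coord; split <;> simp

lemma coord_zero (a : ℕ) : coord r (0 : Fin r → ℚ) a = 0 := by
  unfold coord; split <;> simp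

lemma coord_sub (v w : Fin r → ℚ) (a : ℕ) : coord r (v - w) a = coord r v a - coord r w a := by
  unfold coord; split <;> simp

lemma coord_eB {b : ℕ} (hb : 1 ≤ b) (hbr : b ≤ r) (a : ℕ) :
    coord r (eB r b) a = if a = b then 1 else 0 := by
  unfold coord eB
  split
  · rename_i h
    simp only
    have : a - 1 + 1 = a := by omega
    rw [this]
  · rename_i h
    have : ¬ a = b := by omega
    simp [this]

/-- Canonical root builder: `e_i + σ e_j`, which is `e_i` when `i = j`. -/
def vec (r i j : ℕ) (σ : ℚ) : Fin r → ℚ :=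
  if i = j then eB r i else eB r i + σ • eB r j

lemma vec_self (i : ℕ) (σ : ℚ) : vec r i i σ = eB r i := by simp [vec]

lemma vec_of_ne {i j : ℕ} (h : i ≠ j) (σ : ℚ) : vec r i j σ = eB r i + σ • eB r j := by
  simp [vec, h]

lemma coord_vec {i j : ℕ} (hi : 1 ≤ i) (hij : i ≤ j) (hj : j ≤ r) (σ : ℚ) (a : ℕ) :
    coord r (vec r i j σ) a = if a = i then 1 else if a = j then σ else 0 := by
  rcases eq_or_lt_of_le hij with h | h
  · subst h
    rw [vec_self, coord_eB hi hj]
    by_cases hai : a = i <;> simp [hai]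
  · rw [vec_of_ne (by omega), coord_add, coord_smul, coord_eB hi (le_trans hij hj), coord_eB (by omega) hj]
    by_cases hai : a = i
    · have haj : ¬ a = j := by omega
      rw [if_pos hai, if_neg haj, if_pos hai, mul_zero, add_zero]
    · by_cases haj : a = j
      · rw [if_neg hai, if_pos haj, if_neg hai, if_pos haj, mul_one, zero_add]
      · rw [if_neg hai, if_neg haj, if_neg hai, if_neg haj, mul_zero, add_zero]

lemma vec_ne_zero {i j : ℕ} (hi : 1 ≤ i) (hij : i ≤ j) (hj : j ≤ r) (σ : ℚ) :
    vec r i j σ ≠ 0 := by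
  intro h
  have := congrArg (fun v => coord r v i) h
  simp only [coord_vec hi hij hj, coord_zero, if_pos rfl] at this
  exact one_ne_zero this

/-- Disambiguation: canonical parameters of a root are unique. -/
lemma vec_inj {i j i' j' : ℕ} {σ σ' : ℚ} (hi : 1 ≤ i) (hij : i ≤ j) (hj : j ≤ r)
    (hi' : 1 ≤ i') (hij' : i' ≤ j') (hj' : j' ≤ r) (hσ : σ ≠ 0) (hσ' : σ' ≠ 0)
    (h : vec r i j σ = vec r i' j' σ') : i = i' ∧ j = j' ∧ (i ≠ j → σ = σ') := by
  have key : ∀ a, (if a = i then (1:ℚ) else if a = j then σ else 0)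
      = (if a = i' then 1 else if a = j' then σ' else 0) := by
    intro a
    have hc : coord r (vec r i j σ) a = coord r (vec r i' j' σ') a := by rw [h]
    rwa [coord_vec hi hij hj, coord_vec hi' hij' hj'] at hc
  have mem : ∀ a, (a = i ∨ a = j) → (a = i' ∨ a = j') := by
    intro a ha
    by_contra hcon
    push_neg at hcon
    have hk := key a
    rw [if_neg hcon.1, if_neg hcon.2] at hk
    by_cases hai : a = i
    · rw [if_pos hai] at hk; exact one_ne_zero hk
    · have haj : a = j := by tauto
      rw [if_neg hai, if_pos haj] at hk; exact hσ hk
  have mem' : ∀ a, (a = i' ∨ a = j') → (a = i ∨ a = j) := by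
    intro a ha
    by_contra hcon
    push_neg at hcon
    have hk := key a
    rw [if_neg hcon.1, if_neg hcon.2] at hk
    by_cases hai : a = i'
    · rw [if_pos hai] at hk; exact one_ne_zero hk.symm
    · have haj : a = j' := by tauto
      rw [if_neg hai, if_pos haj] at hk; exact hσ' hk.symm
  have hii : i = i' := by
    have m1 := mem i (Or.inl rfl); have m2 := mem' i' (Or.inl rfl); omega
  have hjj : j = j' := by
    have m1 := mem j (Or.inr rfl); have m2 := mem' j' (Or.inr rfl); omega
  subst hii; subst hjj
  refine ⟨rfl, rfl, fun hne => ?_⟩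
  have hk := key j
  rw [if_neg (by omega), if_pos rfl, if_neg (by omega), if_pos rfl] at hk
  exact hk

lemma pB_eq {i j : ℕ} (hij : i ≤ j) : pB r i j = vec r i j 1 := by
  rcases eq_or_lt_of_le hij with h | h
  · subst h; simp [pB, vec]
  · rw [pB, vec, if_neg (by omega), if_neg (by omega), one_smul]

lemma mB_eq {i j : ℕ} (hij : i ≤ j) : mB r i j = vec r i j (-1) := by
  rcases eq_or_lt_of_le hij with h | h
  · subst h; simp [mB, vec]
  · rw [mB, vec, if_neg (by omega), if_neg (by omega)]
    module

lemma mem_posB_iff {v : Fin r → ℚ} :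
    v ∈ posB r ↔ ∃ i j σ, 1 ≤ i ∧ i ≤ j ∧ j ≤ r ∧ (σ = 1 ∨ σ = -1) ∧ v = vec r i j σ := by
  constructor
  · rintro (⟨i, j, hi, hij, hj, (h | h)⟩ | ⟨i, hi, hir, h⟩)
    · exact ⟨i, j, -1, hi, by omega, hj, Or.inr rfl, by rw [h, vec_of_ne (by omega)]; module⟩
    · exact ⟨i, j, 1, hi, by omega, hj, Or.inl rfl, by rw [h, vec_of_ne (by omega)]; module⟩
    · exact ⟨i, i, 1, hi, le_refl i, hir, Or.inl rfl, by rw [h, vec_self]⟩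
  · rintro ⟨i, j, σ, hi, hij, hj, hσ, h⟩
    rcases eq_or_lt_of_le hij with he | hlt
    · subst he
      exact Or.inr ⟨i, hi, hj, by rw [h, vec_self]⟩
    · rcases hσ with hσ | hσ <;> subst hσ
      · exact Or.inl ⟨i, j, hi, hlt, hj, Or.inr (by rw [h, vec_of_ne (by omega)]; module)⟩
      · exact Or.inl ⟨i, j, hi, hlt, hj, Or.inl (by rw [h, vec_of_ne (by omega)]; module)⟩

lemma mem_rootsB_iff {v : Fin r → ℚ} :
    v ∈ rootsB r ↔ ∃ i j σ, 1 ≤ i ∧ i ≤ j ∧ j ≤ r ∧ (σ = 1 ∨ σ = -1) ∧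
      (v = vec r i j σ ∨ v = -vec r i j σ) := by
  constructor
  · rintro (⟨i, j, hi, hij, hj, (h | h | h | h)⟩ | ⟨i, hi, hir, (h | h)⟩)
    · exact ⟨i, j, -1, hi, by omega, hj, Or.inr rfl, Or.inl (by rw [h, vec_of_ne (by omega)]; module)⟩
    · exact ⟨i, j, -1, hi, by omega, hj, Or.inr rfl, Or.inr (by rw [h, vec_of_ne (by omega)]; module)⟩
    · exact ⟨i, j, 1, hi, by omega, hj, Or.inl rfl, Or.inl (by rw [h, vec_of_ne (by omega)]; module)⟩
    · exact ⟨i, j, 1, hi, by omega, hj, Or.inl rfl, Or.inr (by rw [h, vec_of_ne (by omega)]; module)⟩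
    · exact ⟨i, i, 1, hi, le_refl i, hir, Or.inl rfl, Or.inl (by rw [h, vec_self])⟩
    · exact ⟨i, i, 1, hi, le_refl i, hir, Or.inl rfl, Or.inr (by rw [h, vec_self])⟩
  · rintro ⟨i, j, σ, hi, hij, hj, hσ, (h | h)⟩
    · rcases eq_or_lt_of_le hij with he | hlt
      · subst he
        exact Or.inr ⟨i, hi, hj, Or.inl (by rw [h, vec_self])⟩
      · rcases hσ with hσ | hσ <;> subst hσ
        · exact Or.inl ⟨i, j, hi, hlt, hj, Or.inr <| Or.inr <| Or.inl (by rw [h, vec_of_ne (by omega)]; module)⟩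
        · exact Or.inl ⟨i, j, hi, hlt, hj, Or.inl (by rw [h, vec_of_ne (by omega)]; module)⟩
    · rcases eq_or_lt_of_le hij with he | hlt
      · subst he
        exact Or.inr ⟨i, hi, hj, Or.inr (by rw [h, vec_self])⟩
      · rcases hσ with hσ | hσ <;> subst hσ
        · exact Or.inl ⟨i, j, hi, hlt, hj, Or.inr <| Or.inr <| Or.inr (by rw [h, vec_of_ne (by omega)]; module)⟩
        · exact Or.inl ⟨i, j, hi, hlt, hj, Or.inr <| Or.inl (by rw [h, vec_of_ne (by omega)]; module)⟩

lemma posB_subset_rootsB : posB r ⊆ rootsB r := by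
  intro v hv
  rw [mem_posB_iff] at hv
  rw [mem_rootsB_iff]
  obtain ⟨i, j, σ, h1, h2, h3, h4, h5⟩ := hv
  exact ⟨i, j, σ, h1, h2, h3, h4, Or.inl h5⟩

lemma neg_mem_rootsB {v : Fin r → ℚ} (hv : v ∈ rootsB r) : -v ∈ rootsB r := by
  rw [mem_rootsB_iff] at hv ⊢
  obtain ⟨i, j, σ, h1, h2, h3, h4, (h5 | h5)⟩ := hv
  · exact ⟨i, j, σ, h1, h2, h3, h4, Or.inr (by rw [h5])⟩
  · exact ⟨i, j, σ, h1, h2, h3, h4, Or.inl (by rw [h5, neg_neg])⟩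

lemma idxB_vec {i j : ℕ} (hi : 1 ≤ i) (hij : i ≤ j) (hj : j ≤ r) {σ : ℚ}
    (hσ : σ = 1 ∨ σ = -1) : idxB r (vec r i j σ) i j := by
  rcases eq_or_lt_of_le hij with he | hlt
  · subst he
    exact Or.inr ⟨hi, rfl, hj, (vec_self i σ)⟩
  · rcases hσ with hσ | hσ <;> subst hσ
    · exact Or.inl ⟨hi, hlt, hj, Or.inl (by rw [vec_of_ne (by omega)]; module)⟩
    · exact Or.inl ⟨hi, hlt, hj, Or.inr (by rw [vec_of_ne (by omega)]; module)⟩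

lemma idxB_elim {v : Fin r → ℚ} {i j : ℕ} (h : idxB r v i j) :
    1 ≤ i ∧ i ≤ j ∧ j ≤ r ∧ ∃ σ, (σ = 1 ∨ σ = -1) ∧ v = vec r i j σ := by
  rcases h with ⟨hi, hij, hj, hv⟩ | ⟨hi, hij, hj, hv⟩
  · refine ⟨hi, by omega, hj, ?_⟩
    rcases hv with hv | hv
    · exact ⟨1, Or.inl rfl, by rw [hv, vec_of_ne (by omega)]; module⟩
    · exact ⟨-1, Or.inr rfl, by rw [hv, vec_of_ne (by omega)]; module⟩
  · subst hij
    exact ⟨hi, le_refl i, hj, 1, Or.inl rfl, by rw [hv, vec_self]⟩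


lemma sne {σ : ℚ} (hσ : σ = 1 ∨ σ = -1) : σ ≠ 0 := by
  rcases hσ with rfl | rfl <;> norm_num

lemma star_first {P : Set (Fin r → ℚ)} (hs : starB r P) {i j j' : ℕ} {σ σ' : ℚ}
    (hi : 1 ≤ i) (hij : i ≤ j) (hj : j ≤ r) (hij' : i ≤ j') (hj' : j' ≤ r)
    (hσ : σ = 1 ∨ σ = -1) (hσ' : σ' = 1 ∨ σ' = -1)
    (h1 : vec r i j σ ∈ P) (h2 : vec r i j' σ' ∈ P) :
    j = j' ∧ (i ≠ j → σ = σ') := by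
  have heq : vec r i j σ = vec r i j' σ' := by
    by_contra hne
    exact (hs _ h1 _ h2 hne i j i j' (idxB_vec hi hij hj hσ) (idxB_vec hi hij' hj' hσ')).1 rfl
  have := vec_inj hi hij hj hi hij' hj' (sne hσ) (sne hσ') heq
  exact ⟨this.2.1, this.2.2⟩

lemma star_second {P : Set (Fin r → ℚ)} (hs : starB r P) {i i' j : ℕ} {σ σ' : ℚ}
    (hi : 1 ≤ i) (hij : i ≤ j) (hj : j ≤ r) (hi' : 1 ≤ i') (hij' : i' ≤ j)
    (hσ : σ = 1 ∨ σ = -1) (hσ' : σ' = 1 ∨ σ' = -1)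
    (h1 : vec r i j σ ∈ P) (h2 : vec r i' j σ' ∈ P) :
    i = i' ∧ (i ≠ j → σ = σ') := by
  have heq : vec r i j σ = vec r i' j σ' := by
    by_contra hne
    exact (hs _ h1 _ h2 hne i j i' j (idxB_vec hi hij hj hσ) (idxB_vec hi' hij' hj hσ')).2 rfl
  have := vec_inj hi hij hj hi' hij' hj (sne hσ) (sne hσ') heq
  exact ⟨this.1, this.2.2⟩

lemma star_mono {P Q : Set (Fin r → ℚ)} (h : Q ⊆ P) (hs : starB r P) : starB r Q :=
  fun v hv v' hv' hne i j i' j' h1 h2 => hs v (h hv) v' (h hv') hne i j i' j' h1 h2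

/-- Edges of the graph associated with a set of positive roots. -/
def edgeP (r : ℕ) (P : Set (Fin r → ℚ)) (i j : ℕ) : Prop :=
  1 ≤ i ∧ i < j ∧ j ≤ r ∧ (vec r i j 1 ∈ P ∨ vec r i j (-1) ∈ P)

lemma edgeP_mono {P Q : Set (Fin r → ℚ)} (h : P ⊆ Q) {i j : ℕ} (he : edgeP r P i j) :
    edgeP r Q i j :=
  ⟨he.1, he.2.1, he.2.2.1, he.2.2.2.elim (fun x => Or.inl (h x)) fun x => Or.inr (h x)⟩

lemma rtchain_le {P : Set (Fin r → ℚ)} {i j : ℕ}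
    (h : Relation.ReflTransGen (edgeP r P) i j) : i ≤ j := by
  induction h with
  | refl => exact le_refl i
  | tail _ e ih => have := e.2.1; omega

lemma chain_lt {P : Set (Fin r → ℚ)} {i j : ℕ}
    (h : Relation.TransGen (edgeP r P) i j) : i < j := by
  induction h with
  | single e => exact e.2.1
  | tail _ e ih => have := e.2.1; omega

lemma coord_span_zero {S : Set (Fin r → ℚ)} {a : ℕ} (h : ∀ x ∈ S, coord r x a = 0) :
    ∀ v ∈ Submodule.span ℚ S, coord r v a = 0 := by
  intro v hv
  induction hv using Submodule.span_induction with
  | mem x hx => exact h x hx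
  | zero => exact coord_zero a
  | add x y _ _ hx hy => rw [coord_add, hx, hy, add_zero]
  | smul c x _ hx => rw [coord_smul, hx, mul_zero]

lemma max_split {P : Set (Fin r → ℚ)} (hfin : P.Finite) (hpos : P ⊆ posB r)
    (hstar : starB r P) (hne : P.Nonempty) :
    ∃ i₀ j₀ : ℕ, ∃ σ₀ : ℚ, 1 ≤ i₀ ∧ i₀ ≤ j₀ ∧ j₀ ≤ r ∧ (σ₀ = 1 ∨ σ₀ = -1) ∧
      vec r i₀ j₀ σ₀ ∈ P ∧
      (∀ x ∈ P, x ≠ vec r i₀ j₀ σ₀ → coord r x j₀ = 0) ∧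
      (∀ a, j₀ < a → ∀ x ∈ P, coord r x a = 0) := by
  classical
  set S : Set ℕ := {j | ∃ i : ℕ, ∃ σ : ℚ, 1 ≤ i ∧ i ≤ j ∧ j ≤ r ∧ (σ = 1 ∨ σ = -1) ∧
    vec r i j σ ∈ P} with hS
  have hSfin : S.Finite := by
    apply Set.Finite.subset (Set.finite_Iic r)
    rintro j ⟨i, σ, _, _, hjr, _, _⟩
    exact hjr
  have hSne : S.Nonempty := by
    obtain ⟨x, hx⟩ := hne
    obtain ⟨i, j, σ, h1, h2, h3, h4, h5⟩ := mem_posB_iff.mp (hpos hx)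
    exact ⟨j, i, σ, h1, h2, h3, h4, h5 ▸ hx⟩
  obtain ⟨j₀, hj₀S, hj₀max⟩ := Set.Finite.exists_maximalFor id S hSfin hSne
  have hmax : ∀ b ∈ S, b ≤ j₀ := by
    intro b hb
    rcases le_total b j₀ with h | h
    · exact h
    · exact hj₀max hb h
  obtain ⟨i₀, σ₀, hi₀, hi₀j₀, hj₀r, hσ₀, hβ⟩ := hj₀S
  refine ⟨i₀, j₀, σ₀, hi₀, hi₀j₀, hj₀r, hσ₀, hβ, ?_, ?_⟩
  · intro x hx hxne
    obtain ⟨a, b, ρ, h1, h2, h3, h4, h5⟩ := mem_posB_iff.mp (hpos hx)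
    subst h5
    have hbS : b ∈ S := ⟨a, ρ, h1, h2, h3, h4, hx⟩
    have hb : b ≤ j₀ := hmax b hbS
    have hbne : b ≠ j₀ := by
      intro hbe
      have hx' : vec r a j₀ ρ ∈ P := by rw [← hbe]; exact hx
      obtain ⟨hai, hsig⟩ := star_second hstar h1 (hbe ▸ h2) hj₀r hi₀ hi₀j₀ h4 hσ₀ hx' hβ
      apply hxne
      rw [hbe]
      by_cases haj : a = j₀
      · have hij : i₀ = j₀ := by omega
        rw [haj, vec_self, hij, vec_self]
      · rw [hai, hsig haj]
    rw [coord_vec h1 h2 h3]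
    rw [if_neg (by omega), if_neg (by omega)]
  · intro a ha x hx
    obtain ⟨a', b', ρ, h1, h2, h3, h4, h5⟩ := mem_posB_iff.mp (hpos hx)
    subst h5
    have hb' : b' ≤ j₀ := hmax b' ⟨a', ρ, h1, h2, h3, h4, hx⟩
    rw [coord_vec h1 h2 h3]
    rw [if_neg (by omega), if_neg (by omega)]


lemma master : ∀ n : ℕ, ∀ P : Set (Fin r → ℚ), P.Finite → P.ncard ≤ n → P ⊆ posB r →
    starB r P → ∀ i j : ℕ, ∀ σ : ℚ, 1 ≤ i → i ≤ j → j ≤ r → (σ = 1 ∨ σ = -1) →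
    vec r i j σ ∈ Submodule.span ℚ P →
    (i = j → eB r i ∈ P) ∧
    (i < j → ((eB r i ∈ P ∧ eB r j ∈ P) ∨ Relation.TransGen (edgeP r P) i j)) := by
  intro n
  induction n with
  | zero =>
    intro P hfin hcard hpos hstar i j σ hi hij hj hσ hmem
    have hP : P = ∅ := (Set.ncard_eq_zero hfin).mp (le_antisymm hcard (Nat.zero_le _))
    rw [hP, Submodule.span_empty, Submodule.mem_bot] at hmem
    exact absurd hmem (vec_ne_zero hi hij hj σ)
  | succ n IH =>
    intro P hfin hcard hpos hstar i j σ hi hij hj hσ hmem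
    rcases Set.eq_empty_or_nonempty P with hP | hPne
    · rw [hP, Submodule.span_empty, Submodule.mem_bot] at hmem
      exact absurd hmem (vec_ne_zero hi hij hj σ)
    obtain ⟨i₀, j₀, σ₀, hi₀, hi₀j₀, hj₀r, hσ₀, hβ, hcoordP, hhigh⟩ :=
      max_split hfin hpos hstar hPne
    set β : Fin r → ℚ := vec r i₀ j₀ σ₀ with hβdef
    set P' : Set (Fin r → ℚ) := P \ {β} with hP'def
    clear_value β
    have hP'sub : P' ⊆ P := Set.diff_subset
    have hP'fin : P'.Finite := hfin.subset hP'sub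
    have hP'card : P'.ncard ≤ n := by
      have h2 := Set.ncard_diff_singleton_lt_of_mem hβ hfin
      rw [← hP'def] at h2
      omega
    have hP'pos : P' ⊆ posB r := fun x hx => hpos (hP'sub hx)
    have hP'star : starB r P' := star_mono hP'sub hstar
    have hz : ∀ x ∈ P', coord r x j₀ = 0 := fun x hx => hcoordP x hx.1 hx.2
    have hPP : insert β P' = P := by
      rw [hP'def, Set.insert_diff_singleton, Set.insert_eq_self.mpr hβ]
    have hmem' : vec r i j σ ∈ Submodule.span ℚ (insert β P') := by rw [hPP]; exact hmem
    obtain ⟨c, x, hx, hvx⟩ := Submodule.mem_span_insert.mp hmem'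
    have hxe : x = vec r i j σ - c • β := by rw [hvx]; abel
    have hxz : coord r x j₀ = 0 := coord_span_zero hz x hx
    have hβc : coord r β j₀ = if j₀ = i₀ then 1 else σ₀ := by
      rw [hβdef, coord_vec hi₀ hi₀j₀ hj₀r]
      by_cases h : j₀ = i₀ <;> simp [h]
    have hβc0 : coord r β j₀ ≠ 0 := by
      rw [hβc]; split
      · exact one_ne_zero
      · exact sne hσ₀
    have hclift : coord r (vec r i j σ) j₀ = c * coord r β j₀ := by
      rw [hvx, coord_add, coord_smul, hxz, add_zero]
    -- lifting of conclusions from P' to P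
    have lift : ∀ a b : ℕ,
        ((a = b → eB r a ∈ P') ∧
          (a < b → ((eB r a ∈ P' ∧ eB r b ∈ P') ∨ Relation.TransGen (edgeP r P') a b))) →
        ((a = b → eB r a ∈ P) ∧
          (a < b → ((eB r a ∈ P ∧ eB r b ∈ P) ∨ Relation.TransGen (edgeP r P) a b))) := by
      intro a b h
      refine ⟨fun he => hP'sub (h.1 he), fun hlt => ?_⟩
      rcases h.2 hlt with ⟨h1, h2⟩ | hch
      · exact Or.inl ⟨hP'sub h1, hP'sub h2⟩
      · exact Or.inr (Relation.TransGen.mono (r := edgeP r P') (p := edgeP r P) (fun u v he => edgeP_mono hP'sub he) _ _ hch)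
    -- whenever eB a ∈ P with an edge vec a b τ ∈ P (a < b), star is violated
    have no_loop : ∀ a b : ℕ, ∀ τ : ℚ, 1 ≤ a → a < b → b ≤ r → (τ = 1 ∨ τ = -1) →
        vec r a b τ ∈ P → eB r a ∈ P → False := by
      intro a b τ ha hab hb hτ h1 h2
      have h2' : vec r a a 1 ∈ P := by rw [vec_self]; exact h2
      have := (star_first hstar ha (le_of_lt hab) hb (le_refl a) (le_trans (le_of_lt hab) hb)
        hτ (Or.inl rfl) h1 h2').1
      omega
    by_cases hij0 : i = j₀
    · -- case B : the first index equals the maximal second index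
      have hje : j = i := by
        by_contra hne
        have hjgt : j₀ < j := by omega
        have h0 := coord_span_zero (fun y hy => hhigh j hjgt y hy) _ hmem
        rw [coord_vec hi hij hj, if_neg (by omega), if_pos rfl] at h0
        exact sne hσ h0
      refine ⟨fun _ => ?_, fun hlt => by omega⟩
      by_cases hi0j0 : i₀ = j₀
      · have heq : eB r i = β := by
          rw [hβdef, ← hi0j0, vec_self, hij0, hi0j0]
        rw [heq]; exact hβ
      · exfalso
        have hcv : coord r (vec r i j σ) j₀ = 1 := by
          rw [coord_vec hi hij hj, if_pos hij0.symm]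
        have hc : c = σ₀ := by
          rw [hcv, hβc, if_neg (Ne.symm hi0j0)] at hclift
          rcases hσ₀ with h | h <;> rw [h] at hclift ⊢ <;> linarith
        have hei : eB r i₀ ∈ Submodule.span ℚ P' := by
          have hid : eB r i₀ = (-σ₀) • x := by
            rw [hxe, hc, hβdef, vec_of_ne (show i₀ ≠ j₀ from hi0j0), hje, vec_self, hij0]
            rcases hσ₀ with h | h <;> rw [h] <;> module
          rw [hid]
          exact Submodule.smul_mem _ _ hx
        have hloop : eB r i₀ ∈ P' :=
          (IH P' hP'fin hP'card hP'pos hP'star i₀ i₀ 1 hi₀ (le_refl i₀)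
            (le_trans hi₀j₀ hj₀r) (Or.inl rfl) (by rw [vec_self]; exact hei)).1 rfl
        exact no_loop i₀ j₀ σ₀ hi₀ (lt_of_le_of_ne hi₀j₀ hi0j0) hj₀r hσ₀ (hβdef ▸ hβ)
          (hP'sub hloop)
    · by_cases hjj0 : j = j₀
      · -- case C : the second index equals the maximal second index
        have hiltj : i < j := by omega
        refine ⟨fun he => absurd he (by omega), fun _ => ?_⟩
        have hcv : coord r (vec r i j σ) j₀ = σ := by
          rw [coord_vec hi hij hj, if_neg (by omega), if_pos hjj0.symm]
        by_cases hi0j0 : i₀ = j₀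
        · -- the maximal root is short
          have hβe : β = eB r j := by
            rw [hβdef, ← hi0j0, vec_self, hi0j0, ← hjj0]
          have hc : c = σ := by
            rw [hcv, hβc, if_pos hi0j0.symm, mul_one] at hclift
            exact hclift.symm
          have hei : eB r i ∈ Submodule.span ℚ P' := by
            have hid : eB r i = x := by
              rw [hxe, hc, hβe, vec_of_ne (by omega : i ≠ j)]
              module
            rw [hid]; exact hx
          have hloopi : eB r i ∈ P' :=
            (IH P' hP'fin hP'card hP'pos hP'star i i 1 hi (le_refl i) (by omega)
              (Or.inl rfl) (by rw [vec_self]; exact hei)).1 rfl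
          refine Or.inl ⟨hP'sub hloopi, ?_⟩
          rw [← hβe]; exact hβ
        · -- the maximal root is long
          have hi₀lt : i₀ < j₀ := lt_of_le_of_ne hi₀j₀ hi0j0
          have hβP : vec r i₀ j₀ σ₀ ∈ P := hβdef ▸ hβ
          have hβedge : edgeP r P i₀ j₀ := by
            refine ⟨hi₀, hi₀lt, hj₀r, ?_⟩
            rcases hσ₀ with h | h
            · exact Or.inl (by rw [← h]; exact hβP)
            · exact Or.inr (by rw [← h]; exact hβP)
          have hc : c = σ * σ₀ := by
            rw [hcv, hβc, if_neg (Ne.symm hi0j0)] at hclift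
            rcases hσ₀ with h | h <;> rw [h] at hclift ⊢ <;> linarith
          by_cases hii0 : i = i₀
          · by_cases hss : σ = σ₀
            · refine Or.inr (Relation.TransGen.single ?_)
              rw [hjj0, hii0]
              exact hβedge
            · exfalso
              have hei : eB r i ∈ Submodule.span ℚ P' := by
                have hid : eB r i = (2⁻¹ : ℚ) • x := by
                  rw [hxe, hc, hβdef, vec_of_ne (by omega : i₀ ≠ j₀),
                    vec_of_ne (by omega : i ≠ j), hjj0, hii0]
                  rcases hσ with h | h <;> rcases hσ₀ with h' | h' <;> rw [h, h'] <;>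
                    first
                      | (exact absurd (h.trans h'.symm) hss)
                      | module
                rw [hid]; exact Submodule.smul_mem _ _ hx
              have hloop : eB r i ∈ P' :=
                (IH P' hP'fin hP'card hP'pos hP'star i i 1 hi (le_refl i) (by omega)
                  (Or.inl rfl) (by rw [vec_self]; exact hei)).1 rfl
              have hloop' : eB r i₀ ∈ P' := by rw [← hii0]; exact hloop
              exact no_loop i₀ j₀ σ₀ hi₀ hi₀lt hj₀r hσ₀ hβP (hP'sub hloop')
          · have hρ : -(σ * σ₀) = 1 ∨ -(σ * σ₀) = -1 := by
              rcases hσ with h | h <;> rcases hσ₀ with h' | h' <;> rw [h, h'] <;> norm_num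
            rcases lt_or_gt_of_ne hii0 with hlt | hgt
            · -- i < i₀ : extend the chain from i to i₀ by the maximal edge
              have hw : vec r i i₀ (-(σ * σ₀)) ∈ Submodule.span ℚ P' := by
                have hid : vec r i i₀ (-(σ * σ₀)) = x := by
                  rw [hxe, hc, hβdef, vec_of_ne (by omega : i ≠ i₀),
                    vec_of_ne (by omega : i₀ ≠ j₀), vec_of_ne (by omega : i ≠ j), hjj0]
                  rcases hσ with h | h <;> rcases hσ₀ with h' | h' <;> rw [h, h'] <;> module
                rw [hid]; exact hx
              have hcon := (IH P' hP'fin hP'card hP'pos hP'star i i₀ _ hi (le_of_lt hlt)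
                (le_trans hi₀j₀ hj₀r) hρ hw).2 hlt
              rcases hcon with ⟨h1, h2⟩ | hch
              · exact (no_loop i₀ j₀ σ₀ hi₀ hi₀lt hj₀r hσ₀ hβP (hP'sub h2)).elim
              · refine Or.inr ?_
                rw [hjj0]
                exact Relation.TransGen.tail
                  (Relation.TransGen.mono (r := edgeP r P') (p := edgeP r P) (fun u v he => edgeP_mono hP'sub he) _ _ hch) hβedge
            · -- i₀ < i : impossible, the first edge of the chain clashes with the maximal edge
              exfalso
              have hw : vec r i₀ i (-(σ * σ₀)) ∈ Submodule.span ℚ P' := by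
                have hid : vec r i₀ i (-(σ * σ₀)) = (-(σ * σ₀)) • x := by
                  rw [hxe, hc, hβdef, vec_of_ne (by omega : i₀ ≠ i),
                    vec_of_ne (by omega : i₀ ≠ j₀), vec_of_ne (by omega : i ≠ j), hjj0]
                  rcases hσ with h | h <;> rcases hσ₀ with h' | h' <;> rw [h, h'] <;> module
                rw [hid]; exact Submodule.smul_mem _ _ hx
              have hcon := (IH P' hP'fin hP'card hP'pos hP'star i₀ i _ hi₀ (le_of_lt hgt)
                (by omega) hρ hw).2 hgt
              rcases hcon with ⟨h1, h2⟩ | hch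
              · exact no_loop i₀ j₀ σ₀ hi₀ hi₀lt hj₀r hσ₀ hβP (hP'sub h1)
              · obtain ⟨d, hd, hdch⟩ := Relation.TransGen.head'_iff.mp hch
                have hdi : d ≤ i := rtchain_le hdch
                obtain ⟨hd1, hd2, hd3, hd4⟩ := hd
                rcases hd4 with hm | hm
                · have := (star_first hstar hi₀ (le_of_lt hd2) hd3 hi₀j₀ hj₀r (Or.inl rfl) hσ₀
                    (hP'sub hm) hβP).1
                  omega
                · have := (star_first hstar hi₀ (le_of_lt hd2) hd3 hi₀j₀ hj₀r (Or.inr rfl) hσ₀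
                    (hP'sub hm) hβP).1
                  omega
      · -- case A : the coefficient of the maximal root is zero
        have hcv : coord r (vec r i j σ) j₀ = 0 := by
          rw [coord_vec hi hij hj, if_neg (by omega), if_neg (by omega)]
        have hc : c = 0 := by
          rw [hcv] at hclift
          rcases mul_eq_zero.mp hclift.symm with h | h
          · exact h
          · exact absurd h hβc0
        have hvP' : vec r i j σ ∈ Submodule.span ℚ P' := by
          rw [hc, zero_smul, zero_add] at hvx
          rw [hvx]; exact hx
        exact lift i j (IH P' hP'fin hP'card hP'pos hP'star i j σ hi hij hj hσ hvP')


lemma eB_zero : eB r 0 = 0 := by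
  funext t
  simp [eB]

lemma posB_finite : (posB r).Finite := by
  have hsub : posB r ⊆ (fun p : ℕ × ℕ × Bool =>
      if p.2.2 then eB r p.1 + eB r p.2.1 else eB r p.1 - eB r p.2.1) ''
      (Set.Iic r ×ˢ Set.Iic r ×ˢ (Set.univ : Set Bool)) := by
    rintro v (⟨i, j, hi, hij, hj, (h | h)⟩ | ⟨i, hi, hir, h⟩)
    · exact ⟨(i, j, false), ⟨Set.mem_Iic.mpr (by omega), Set.mem_Iic.mpr (show j ≤ r by omega), trivial⟩, by simp [h]⟩
    · exact ⟨(i, j, true), ⟨Set.mem_Iic.mpr (by omega), Set.mem_Iic.mpr (show j ≤ r by omega), trivial⟩, by simp [h]⟩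
    · refine ⟨(i, 0, false), ⟨Set.mem_Iic.mpr (by omega), Set.mem_Iic.mpr (show (0:ℕ) ≤ r by omega), trivial⟩, ?_⟩
      simp only [eB_zero]
      rw [h]
      simp
  exact Set.Finite.subset (Set.Finite.image _
    ((Set.finite_Iic r).prod ((Set.finite_Iic r).prod Set.finite_univ))) hsub

lemma star_indep : ∀ n : ℕ, ∀ P : Set (Fin r → ℚ), P.Finite → P.ncard ≤ n → P ⊆ posB r →
    starB r P → LinearIndependent ℚ ((↑) : P → (Fin r → ℚ)) := by
  intro n
  induction n with
  | zero =>
    intro P hfin hcard hpos hstar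
    have hP : P = ∅ := (Set.ncard_eq_zero hfin).mp (le_antisymm hcard (Nat.zero_le _))
    rw [hP]
    exact linearIndependent_empty _ _
  | succ n IH =>
    intro P hfin hcard hpos hstar
    rcases Set.eq_empty_or_nonempty P with hP | hPne
    · rw [hP]; exact linearIndependent_empty _ _
    obtain ⟨i₀, j₀, σ₀, hi₀, hi₀j₀, hj₀r, hσ₀, hβ, hcoordP, hhigh⟩ :=
      max_split hfin hpos hstar hPne
    set β : Fin r → ℚ := vec r i₀ j₀ σ₀ with hβdef
    set P' : Set (Fin r → ℚ) := P \ {β} with hP'def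
    have hP'sub : P' ⊆ P := Set.diff_subset
    have hP'fin : P'.Finite := hfin.subset hP'sub
    have hP'card : P'.ncard ≤ n := by
      have h2 := Set.ncard_diff_singleton_lt_of_mem hβ hfin
      rw [← hP'def] at h2
      omega
    have hind' := IH P' hP'fin hP'card (fun x hx => hpos (hP'sub hx)) (star_mono hP'sub hstar)
    have hβns : β ∉ Submodule.span ℚ P' := by
      intro hmem
      have h0 := coord_span_zero (fun x hx => hcoordP x hx.1 hx.2) β hmem
      rw [hβdef, coord_vec hi₀ hi₀j₀ hj₀r] at h0
      by_cases h : j₀ = i₀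
      · rw [if_pos h] at h0; exact one_ne_zero h0
      · rw [if_neg h, if_pos rfl] at h0; exact sne hσ₀ h0
    have hPP : insert β P' = P := by
      rw [hP'def, Set.insert_diff_singleton, Set.insert_eq_self.mpr hβ]
    rw [← hPP]
    exact LinearIndepOn.id_insert hind' hβns

lemma star_ncard_eq_finrank {P : Set (Fin r → ℚ)} (hfin : P.Finite) (hpos : P ⊆ posB r)
    (hstar : starB r P) : P.ncard = Module.finrank ℚ (Submodule.span ℚ P) := by
  have hind := star_indep P.ncard P hfin le_rfl hpos hstar
  haveI := hfin.fintype
  rw [finrank_span_set_eq_card hind, Set.ncard_eq_toFinset_card']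

lemma mem_of_span_root {Ψ : Set (Fin r → ℚ)}
    (hΨ : Ψ = ↑(Submodule.span ℚ Ψ) ∩ rootsB r) {i j : ℕ} {σ : ℚ}
    (hi : 1 ≤ i) (hij : i ≤ j) (hj : j ≤ r) (hσ : σ = 1 ∨ σ = -1)
    (h : vec r i j σ ∈ Submodule.span ℚ Ψ) : vec r i j σ ∈ Ψ := by
  rw [hΨ]
  exact ⟨h, mem_rootsB_iff.mpr ⟨i, j, σ, hi, hij, hj, hσ, Or.inl rfl⟩⟩

lemma mem_FmapB_long {Ψ : Set (Fin r → ℚ)} {i j : ℕ} {σ : ℚ} (hi : 1 ≤ i) (hij : i < j)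
    (hj : j ≤ r) (hσ : σ = 1 ∨ σ = -1) (hmem : vec r i j σ ∈ Ψ)
    (hmin1 : ∀ j' : ℕ, ∀ τ : ℚ, i ≤ j' → j' < j → (τ = 1 ∨ τ = -1) → vec r i j' τ ∉ Ψ)
    (hmin2 : ∀ i' : ℕ, ∀ τ : ℚ, i < i' → i' ≤ j → (τ = 1 ∨ τ = -1) → vec r i' j τ ∉ Ψ) :
    vec r i j σ ∈ FmapB r Ψ := by
  left
  refine ⟨i, j, hi, hij, hj, ?_, hmem, ?_, ?_⟩
  · rcases hσ with h | h <;> rw [h, vec_of_ne (by omega : i ≠ j)]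
    · exact Or.inl (by module)
    · exact Or.inr (by module)
  · intro j' h1 h2
    constructor
    · rw [pB_eq h1]
      exact hmin1 j' 1 h1 h2 (Or.inl rfl)
    · rw [mB_eq h1]
      exact hmin1 j' (-1) h1 h2 (Or.inr rfl)
  · intro i' h1 h2
    constructor
    · rw [pB_eq h2]
      exact hmin2 i' 1 h1 h2 (Or.inl rfl)
    · rw [mB_eq h2]
      exact hmin2 i' (-1) h1 h2 (Or.inr rfl)

lemma mem_FmapB_short {Ψ : Set (Fin r → ℚ)} {i : ℕ} (hi : 1 ≤ i) (hir : i ≤ r)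
    (hmem : eB r i ∈ Ψ) : eB r i ∈ FmapB r Ψ :=
  Or.inr ⟨i, hi, hir, rfl, hmem⟩

lemma mem_FmapB_elim {Ψ : Set (Fin r → ℚ)} {v : Fin r → ℚ} (h : v ∈ FmapB r Ψ) :
    (∃ i j : ℕ, ∃ σ : ℚ, 1 ≤ i ∧ i < j ∧ j ≤ r ∧ (σ = 1 ∨ σ = -1) ∧ v = vec r i j σ ∧
      v ∈ Ψ ∧
      (∀ j' : ℕ, ∀ τ : ℚ, i ≤ j' → j' < j → (τ = 1 ∨ τ = -1) → vec r i j' τ ∉ Ψ) ∧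
      (∀ i' : ℕ, ∀ τ : ℚ, i < i' → i' ≤ j → (τ = 1 ∨ τ = -1) → vec r i' j τ ∉ Ψ)) ∨
    (∃ i : ℕ, 1 ≤ i ∧ i ≤ r ∧ v = eB r i ∧ eB r i ∈ Ψ) := by
  rcases h with ⟨i, j, hi, hij, hj, hv, hmem, hmin1, hmin2⟩ | hs
  · left
    have hmin1' : ∀ j' : ℕ, ∀ τ : ℚ, i ≤ j' → j' < j → (τ = 1 ∨ τ = -1) → vec r i j' τ ∉ Ψ := by
      intro j' τ h1 h2 hτ
      rcases hτ with h' | h' <;> rw [h']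
      · rw [← pB_eq h1]; exact (hmin1 j' h1 h2).1
      · rw [← mB_eq h1]; exact (hmin1 j' h1 h2).2
    have hmin2' : ∀ i' : ℕ, ∀ τ : ℚ, i < i' → i' ≤ j → (τ = 1 ∨ τ = -1) → vec r i' j τ ∉ Ψ := by
      intro i' τ h1 h2 hτ
      rcases hτ with h' | h' <;> rw [h']
      · rw [← pB_eq h2]; exact (hmin2 i' h1 h2).1
      · rw [← mB_eq h2]; exact (hmin2 i' h1 h2).2
    rcases hv with hv | hv
    · exact ⟨i, j, 1, hi, hij, hj, Or.inl rfl,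
        by rw [hv, vec_of_ne (by omega : i ≠ j)]; module, hmem, hmin1', hmin2'⟩
    · exact ⟨i, j, -1, hi, hij, hj, Or.inr rfl,
        by rw [hv, vec_of_ne (by omega : i ≠ j)]; module, hmem, hmin1', hmin2'⟩
  · exact Or.inr hs

lemma FmapB_subset {Ψ : Set (Fin r → ℚ)} : FmapB r Ψ ⊆ Ψ := by
  intro v hv
  rcases mem_FmapB_elim hv with ⟨i, j, σ, _, _, _, _, _, hmem, _, _⟩ | ⟨i, _, _, hv', hmem⟩
  · exact hmem
  · rw [hv']; exact hmem

lemma FmapB_subset_posB {Ψ : Set (Fin r → ℚ)} : FmapB r Ψ ⊆ posB r := by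
  intro v hv
  rcases mem_FmapB_elim hv with ⟨i, j, σ, h1, h2, h3, h4, h5, _, _, _⟩ | ⟨i, h1, h2, h3, _⟩
  · exact mem_posB_iff.mpr ⟨i, j, σ, h1, by omega, h3, h4, h5⟩
  · exact mem_posB_iff.mpr ⟨i, i, 1, h1, le_refl i, h2, Or.inl rfl, by rw [h3, vec_self]⟩


lemma half_sum {Ψ : Set (Fin r → ℚ)}
    (hΨ : Ψ = ↑(Submodule.span ℚ Ψ) ∩ rootsB r) {i j : ℕ} {σ : ℚ}
    (hi : 1 ≤ i) (hij : i < j) (hj : j ≤ r) (hσ : σ = 1 ∨ σ = -1)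
    (h1 : vec r i j σ ∈ Ψ) (h2 : vec r i j (-σ) ∈ Ψ) : eB r i ∈ Ψ ∧ eB r j ∈ Ψ := by
  have hm1 : vec r i j σ ∈ Submodule.span ℚ Ψ := Submodule.subset_span h1
  have hm2 : vec r i j (-σ) ∈ Submodule.span ℚ Ψ := Submodule.subset_span h2
  have hei : eB r i ∈ Submodule.span ℚ Ψ := by
    have hid : eB r i = (2⁻¹ : ℚ) • (vec r i j σ + vec r i j (-σ)) := by
      rw [vec_of_ne (by omega : i ≠ j), vec_of_ne (by omega : i ≠ j)]
      module
    rw [hid]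
    exact Submodule.smul_mem _ _ (Submodule.add_mem _ hm1 hm2)
  have hej : eB r j ∈ Submodule.span ℚ Ψ := by
    have hid : eB r j = (σ / 2) • (vec r i j σ - vec r i j (-σ)) := by
      rw [vec_of_ne (by omega : i ≠ j), vec_of_ne (by omega : i ≠ j)]
      rcases hσ with h | h <;> rw [h] <;> module
    rw [hid]
    exact Submodule.smul_mem _ _ (Submodule.sub_mem _ hm1 hm2)
  constructor
  · rw [← vec_self i (1:ℚ)]
    exact mem_of_span_root hΨ hi (le_refl i) (by omega) (Or.inl rfl) (by rw [vec_self]; exact hei)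
  · rw [← vec_self j (1:ℚ)]
    exact mem_of_span_root hΨ (by omega) (le_refl j) hj (Or.inl rfl) (by rw [vec_self]; exact hej)

lemma neg_sign {σ τ : ℚ} (hσ : σ = 1 ∨ σ = -1) (hτ : τ = 1 ∨ τ = -1) (hne : σ ≠ τ) :
    τ = -σ := by
  rcases hσ with h | h <;> rcases hτ with h' | h' <;> rw [h, h'] <;> rw [h, h'] at hne <;>
    first
      | (exact absurd rfl hne)
      | norm_num

lemma F_star {Ψ : Set (Fin r → ℚ)}
    (hΨ : Ψ = ↑(Submodule.span ℚ Ψ) ∩ rootsB r) : starB r (FmapB r Ψ) := by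
  intro v hv v' hv' hne i j i' j' hidx hidx'
  obtain ⟨hi, hij, hj, σv, hσv, hvev⟩ := idxB_elim hidx
  obtain ⟨hi', hij', hj', σv', hσv', hvev'⟩ := idxB_elim hidx'
  -- identify the canonical parameters of v and v'
  rcases mem_FmapB_elim hv with ⟨a, b, ς, ha, hab, hb, hς, hvab, hvΨ, hmin1, hmin2⟩ |
      ⟨d, hd, hdr, hvd, hdΨ⟩
  · -- v is long with parameters (a, b)
    have hij_ab : i = a ∧ j = b := by
      have := vec_inj hi hij hj ha (le_of_lt hab) hb (sne hσv) (sne hς)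
        (by rw [← hvev, ← hvab])
      exact ⟨this.1, this.2.1⟩
    obtain ⟨hia, hjb⟩ := hij_ab
    subst hia; subst hjb
    rcases mem_FmapB_elim hv' with ⟨a', b', ς', ha', hab', hb', hς', hvab', hvΨ', hmin1', hmin2'⟩ |
        ⟨d', hd', hdr', hvd', hdΨ'⟩
    · -- v' long with parameters (a', b')
      have hij_ab' : i' = a' ∧ j' = b' := by
        have := vec_inj hi' hij' hj' ha' (le_of_lt hab') hb' (sne hσv') (sne hς')
          (by rw [← hvev', ← hvab'])
        exact ⟨this.1, this.2.1⟩
      obtain ⟨hia', hjb'⟩ := hij_ab'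
      subst hia'; subst hjb'
      constructor
      · -- first indices differ
        intro hii'
        subst hii'
        rcases lt_trichotomy j j' with hlt | heq | hgt
        · exact hmin1' j ς (le_of_lt hab) hlt hς (by rw [← hvab]; exact hvΨ)
        · subst heq
          have hςne : ς ≠ ς' := by
            intro hee
            exact hne (by rw [hvab, hvab', hee])
          have hς'e : ς' = -ς := neg_sign hς hς' hςne
          have := (half_sum hΨ hi hab hb hς (by rw [← hvab]; exact hvΨ)
            (by rw [← hς'e, ← hvab']; exact hvΨ')).1
          exact hmin1 i 1 (le_refl i) hab (Or.inl rfl) (by rw [vec_self]; exact this)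
        · exact hmin1 j' ς' (le_of_lt hab') hgt hς' (by rw [← hvab']; exact hvΨ')
      · -- second indices differ
        intro hjj'
        subst hjj'
        rcases lt_trichotomy i i' with hlt | heq | hgt
        · exact hmin2 i' ς' hlt (le_of_lt hab') hς' (by rw [← hvab']; exact hvΨ')
        · subst heq
          have hςne : ς ≠ ς' := by
            intro hee
            exact hne (by rw [hvab, hvab', hee])
          have hς'e : ς' = -ς := neg_sign hς hς' hςne
          have := (half_sum hΨ hi hab hb hς (by rw [← hvab]; exact hvΨ)
            (by rw [← hς'e, ← hvab']; exact hvΨ')).1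
          exact hmin1 i 1 (le_refl i) hab (Or.inl rfl) (by rw [vec_self]; exact this)
        · exact hmin2' i ς hgt (le_of_lt hab) hς (by rw [← hvab]; exact hvΨ)
    · -- v' short, v long
      have hij_d' : i' = d' ∧ j' = d' := by
        have := vec_inj hi' hij' hj' hd' (le_refl d') hdr' (sne hσv') one_ne_zero
          (by rw [← hvev', vec_self, ← hvd'])
        exact ⟨this.1, this.2.1⟩
      constructor
      · intro hii'
        have hin : eB r i ∈ Ψ := by rw [show i = d' by omega]; exact hdΨ'
        exact hmin1 i 1 (le_refl i) hab (Or.inl rfl) (by rw [vec_self]; exact hin)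
      · intro hjj'
        have hin : eB r j ∈ Ψ := by rw [show j = d' by omega]; exact hdΨ'
        exact hmin2 j 1 hab (le_refl j) (Or.inl rfl) (by rw [vec_self]; exact hin)
  · -- v short
    have hij_d : i = d ∧ j = d := by
      have := vec_inj hi hij hj hd (le_refl d) hdr (sne hσv) one_ne_zero
        (by rw [← hvev, vec_self, ← hvd])
      exact ⟨this.1, this.2.1⟩
    rcases mem_FmapB_elim hv' with ⟨a', b', ς', ha', hab', hb', hς', hvab', hvΨ', hmin1', hmin2'⟩ |
        ⟨d', hd', hdr', hvd', hdΨ'⟩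
    · have hij_ab' : i' = a' ∧ j' = b' := by
        have := vec_inj hi' hij' hj' ha' (le_of_lt hab') hb' (sne hσv') (sne hς')
          (by rw [← hvev', ← hvab'])
        exact ⟨this.1, this.2.1⟩
      constructor
      · intro hii'
        have hin : eB r a' ∈ Ψ := by rw [show a' = d by omega]; exact hdΨ
        exact hmin1' a' 1 (le_refl a') hab' (Or.inl rfl) (by rw [vec_self]; exact hin)
      · intro hjj'
        have hin : eB r b' ∈ Ψ := by rw [show b' = d by omega]; exact hdΨ
        exact hmin2' b' 1 hab' (le_refl b') (Or.inl rfl) (by rw [vec_self]; exact hin)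
    · have hij_d' : i' = d' ∧ j' = d' := by
        have := vec_inj hi' hij' hj' hd' (le_refl d') hdr' (sne hσv') one_ne_zero
          (by rw [← hvev', vec_self, ← hvd'])
        exact ⟨this.1, this.2.1⟩
      constructor
      · intro hii'
        exact hne (by rw [hvd, hvd', show d = d' by omega])
      · intro hjj'
        exact hne (by rw [hvd, hvd', show d = d' by omega])


lemma short_in_F {Ψ : Set (Fin r → ℚ)} {i : ℕ} (hi : 1 ≤ i) (hir : i ≤ r)
    (hmem : eB r i ∈ Ψ) : eB r i ∈ Submodule.span ℚ (FmapB r Ψ) :=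
  Submodule.subset_span (mem_FmapB_short hi hir hmem)

lemma F_span_aux {Ψ : Set (Fin r → ℚ)}
    (hΨ : Ψ = ↑(Submodule.span ℚ Ψ) ∩ rootsB r) :
    ∀ w : ℕ, ∀ i j : ℕ, ∀ σ : ℚ, 1 ≤ i → i ≤ j → j ≤ r → j ≤ i + w → (σ = 1 ∨ σ = -1) →
    vec r i j σ ∈ Ψ → vec r i j σ ∈ Submodule.span ℚ (FmapB r Ψ) := by
  intro w
  induction w with
  | zero =>
    intro i j σ hi hij hj hw hσ hmem
    have hije : i = j := by omega
    subst hije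
    rw [vec_self] at hmem ⊢
    exact short_in_F hi hj hmem
  | succ w IHw =>
    intro i j σ hi hij hj hw hσ hmem
    rcases eq_or_lt_of_le hij with hije | hlt
    · subst hije
      rw [vec_self] at hmem ⊢
      exact short_in_F hi hj hmem
    by_cases hF : vec r i j σ ∈ FmapB r Ψ
    · exact Submodule.subset_span hF
    have hex : (∃ j' : ℕ, ∃ τ : ℚ, i ≤ j' ∧ j' < j ∧ (τ = 1 ∨ τ = -1) ∧ vec r i j' τ ∈ Ψ) ∨
        (∃ i' : ℕ, ∃ τ : ℚ, i < i' ∧ i' ≤ j ∧ (τ = 1 ∨ τ = -1) ∧ vec r i' j τ ∈ Ψ) := by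
      by_contra hcon
      push_neg at hcon
      refine hF (mem_FmapB_long hi hlt hj hσ hmem ?_ ?_)
      · intro j' τ h1 h2 hτ
        exact hcon.1 j' τ h1 h2 hτ
      · intro i' τ h1 h2 hτ
        exact hcon.2 i' τ h1 h2 hτ
    have hspanΨ : ∀ u ∈ Ψ, u ∈ Submodule.span ℚ Ψ := fun u hu => Submodule.subset_span hu
    rcases hex with ⟨j', τ, h1, h2, hτ, hm⟩ | ⟨i', τ, h1, h2, hτ, hm⟩
    · rcases eq_or_lt_of_le h1 with he | hlt'
      · -- j' = i : both e_i and e_j lie in Ψ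
        have heiΨ : eB r i ∈ Ψ := by
          have hee : vec r i j' τ = eB r i := by rw [← he, vec_self]
          rw [← hee]
          exact hm
        have hejΨ : eB r j ∈ Ψ := by
          rw [← vec_self j (1:ℚ)]
          refine mem_of_span_root hΨ (by omega) (le_refl j) hj (Or.inl rfl) ?_
          rw [vec_self]
          have hid : eB r j = σ • (vec r i j σ - eB r i) := by
            rw [vec_of_ne (by omega : i ≠ j)]
            rcases hσ with h | h <;> rw [h] <;> module
          rw [hid]
          exact Submodule.smul_mem _ _ (Submodule.sub_mem _ (hspanΨ _ hmem) (hspanΨ _ heiΨ))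
        have hid : vec r i j σ = eB r i + σ • eB r j := vec_of_ne (by omega : i ≠ j) σ
        rw [hid]
        exact Submodule.add_mem _ (short_in_F hi (by omega) heiΨ)
          (Submodule.smul_mem _ _ (short_in_F (by omega) hj hejΨ))
      · -- i < j' < j
        have hwΨ : vec r j' j (-(τ * σ)) ∈ Ψ := by
          refine mem_of_span_root hΨ (by omega) (by omega) hj ?_ ?_
          · rcases hτ with h | h <;> rcases hσ with h' | h' <;> rw [h, h'] <;> norm_num
          · have hid : vec r j' j (-(τ * σ)) = (-τ) • (vec r i j σ - vec r i j' τ) := by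
              rw [vec_of_ne (by omega : i ≠ j), vec_of_ne (by omega : i ≠ j'),
                vec_of_ne (by omega : j' ≠ j)]
              rcases hτ with h | h <;> rcases hσ with h' | h' <;> rw [h, h'] <;> module
            rw [hid]
            exact Submodule.smul_mem _ _ (Submodule.sub_mem _ (hspanΨ _ hmem) (hspanΨ _ hm))
        have hu1 := IHw i j' τ hi (le_of_lt hlt') (by omega) (by omega) hτ hm
        have hu2 := IHw j' j (-(τ * σ)) (by omega) (le_of_lt h2) hj (by omega)
          (by rcases hτ with h | h <;> rcases hσ with h' | h' <;> rw [h, h'] <;> norm_num) hwΨ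
        have hid : vec r i j σ = vec r i j' τ + (-τ) • vec r j' j (-(τ * σ)) := by
          rw [vec_of_ne (by omega : i ≠ j), vec_of_ne (by omega : i ≠ j'),
            vec_of_ne (by omega : j' ≠ j)]
          rcases hτ with h | h <;> rcases hσ with h' | h' <;> rw [h, h'] <;> module
        rw [hid]
        exact Submodule.add_mem _ hu1 (Submodule.smul_mem _ _ hu2)
    · rcases eq_or_lt_of_le h2 with he | hlt'
      · -- i' = j : both e_i and e_j lie in Ψ
        have hejΨ : eB r j ∈ Ψ := by
          have hee : vec r i' j τ = eB r j := by rw [he, vec_self]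
          rw [← hee]
          exact hm
        have heiΨ : eB r i ∈ Ψ := by
          rw [← vec_self i (1:ℚ)]
          refine mem_of_span_root hΨ hi (le_refl i) (by omega) (Or.inl rfl) ?_
          rw [vec_self]
          have hid : eB r i = vec r i j σ - σ • eB r j := by
            rw [vec_of_ne (by omega : i ≠ j)]
            module
          rw [hid]
          exact Submodule.sub_mem _ (hspanΨ _ hmem) (Submodule.smul_mem _ _ (hspanΨ _ hejΨ))
        have hid : vec r i j σ = eB r i + σ • eB r j := vec_of_ne (by omega : i ≠ j) σ
        rw [hid]
        exact Submodule.add_mem _ (short_in_F hi (by omega) heiΨ)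
          (Submodule.smul_mem _ _ (short_in_F (by omega) hj hejΨ))
      · -- i < i' < j
        have hwΨ : vec r i i' (-(σ * τ)) ∈ Ψ := by
          refine mem_of_span_root hΨ hi (by omega) (by omega) ?_ ?_
          · rcases hτ with h | h <;> rcases hσ with h' | h' <;> rw [h, h'] <;> norm_num
          · have hid : vec r i i' (-(σ * τ)) = vec r i j σ - (σ * τ) • vec r i' j τ := by
              rw [vec_of_ne (by omega : i ≠ j), vec_of_ne (by omega : i ≠ i'),
                vec_of_ne (by omega : i' ≠ j)]
              rcases hτ with h | h <;> rcases hσ with h' | h' <;> rw [h, h'] <;> module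
            rw [hid]
            exact Submodule.sub_mem _ (hspanΨ _ hmem) (Submodule.smul_mem _ _ (hspanΨ _ hm))
        have hu1 := IHw i i' (-(σ * τ)) hi (le_of_lt h1) (by omega) (by omega)
          (by rcases hτ with h | h <;> rcases hσ with h' | h' <;> rw [h, h'] <;> norm_num) hwΨ
        have hu2 := IHw i' j τ (by omega) (le_of_lt hlt') hj (by omega) hτ hm
        have hid : vec r i j σ = vec r i i' (-(σ * τ)) + (σ * τ) • vec r i' j τ := by
          rw [vec_of_ne (by omega : i ≠ j), vec_of_ne (by omega : i ≠ i'),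
            vec_of_ne (by omega : i' ≠ j)]
          rcases hτ with h | h <;> rcases hσ with h' | h' <;> rw [h, h'] <;> module
        rw [hid]
        exact Submodule.add_mem _ hu1 (Submodule.smul_mem _ _ hu2)

lemma F_span {Ψ : Set (Fin r → ℚ)}
    (hΨ : Ψ = ↑(Submodule.span ℚ Ψ) ∩ rootsB r) :
    Submodule.span ℚ (FmapB r Ψ) = Submodule.span ℚ Ψ := by
  apply le_antisymm
  · exact Submodule.span_mono FmapB_subset
  · rw [Submodule.span_le]
    intro v hv
    have hroot : v ∈ rootsB r := by
      rw [hΨ] at hv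
      exact hv.2
    obtain ⟨i, j, σ, hi, hij, hj, hσ, hcase⟩ := mem_rootsB_iff.mp hroot
    rcases hcase with hc | hc
    · rw [hc]
      rw [hc] at hv
      exact F_span_aux hΨ r i j σ hi hij hj (by omega) hσ hv
    · have hvneg : vec r i j σ ∈ Ψ := by
        rw [hΨ]
        refine ⟨?_, mem_rootsB_iff.mpr ⟨i, j, σ, hi, hij, hj, hσ, Or.inl rfl⟩⟩
        have : vec r i j σ = -v := by rw [hc, neg_neg]
        rw [this]
        exact Submodule.neg_mem _ (Submodule.subset_span hv)
      have := F_span_aux hΨ r i j σ hi hij hj (by omega) hσ hvneg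
      rw [hc]
      exact Submodule.neg_mem _ this


lemma maximal_eq_span_inter {Ψ : Set (Fin r → ℚ)} {m : ℕ}
    (h : IsMaxClosedOfRank (rootsB r) Ψ m) :
    Ψ = ↑(Submodule.span ℚ Ψ) ∩ rootsB r := by
  obtain ⟨⟨hsub, hneg, hcl⟩, hrank, hmax⟩ := h
  have hsub2 : Ψ ⊆ ↑(Submodule.span ℚ Ψ) ∩ rootsB r := fun v hv =>
    ⟨Submodule.subset_span hv, hsub hv⟩
  have hspan_eq : Submodule.span ℚ ((↑(Submodule.span ℚ Ψ) ∩ rootsB r : Set (Fin r → ℚ))) =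
      Submodule.span ℚ Ψ := by
    apply le_antisymm
    · rw [Submodule.span_le]
      exact fun v hv => hv.1
    · exact Submodule.span_mono hsub2
  have hcl' : IsClosedSub (rootsB r) (↑(Submodule.span ℚ Ψ) ∩ rootsB r) :=
    ⟨Set.inter_subset_right, fun l hl => ⟨Submodule.neg_mem _ hl.1, neg_mem_rootsB hl.2⟩,
      fun l hl mm hm hsum => ⟨Submodule.add_mem _ hl.1 hm.1, hsum⟩⟩
  have hrk : rankOf (↑(Submodule.span ℚ Ψ) ∩ rootsB r : Set (Fin r → ℚ)) = m := by
    show Module.finrank ℚ (Submodule.span ℚ ((↑(Submodule.span ℚ Ψ) ∩ rootsB r :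
      Set (Fin r → ℚ)))) = m
    rw [hspan_eq]
    exact hrank
  exact (hmax _ hcl' hrk hsub2).symm

lemma F_target {Ψ : Set (Fin r → ℚ)} {m : ℕ} (h : IsMaxClosedOfRank (rootsB r) Ψ m) :
    FmapB r Ψ ⊆ posB r ∧ (FmapB r Ψ).ncard = m ∧ starB r (FmapB r Ψ) := by
  have hΨ := maximal_eq_span_inter h
  have hstar := F_star hΨ
  have hfin : (FmapB r Ψ).Finite := posB_finite.subset FmapB_subset_posB
  refine ⟨FmapB_subset_posB, ?_, hstar⟩
  rw [star_ncard_eq_finrank hfin FmapB_subset_posB hstar, F_span hΨ]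
  exact h.2.1

lemma G_F_eq {Ψ : Set (Fin r → ℚ)} {m : ℕ} (h : IsMaxClosedOfRank (rootsB r) Ψ m) :
    GmapB r (FmapB r Ψ) = Ψ := by
  have hΨ := maximal_eq_span_inter h
  unfold GmapB
  rw [F_span hΨ]
  exact hΨ.symm

lemma G_span {P : Set (Fin r → ℚ)} (hpos : P ⊆ posB r) :
    Submodule.span ℚ (GmapB r P) = Submodule.span ℚ P := by
  apply le_antisymm
  · rw [Submodule.span_le]
    exact fun v hv => hv.1
  · exact Submodule.span_mono fun v hv =>
      ⟨Submodule.subset_span hv, posB_subset_rootsB (hpos hv)⟩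

lemma G_source {P : Set (Fin r → ℚ)} (hpos : P ⊆ posB r) (hstar : starB r P) :
    IsMaxClosedOfRank (rootsB r) (GmapB r P) P.ncard := by
  have hfin : P.Finite := posB_finite.subset hpos
  have hspan := G_span hpos
  refine ⟨⟨Set.inter_subset_right, fun l hl => ⟨Submodule.neg_mem _ hl.1, neg_mem_rootsB hl.2⟩,
    fun l hl mm hm hsum => ⟨Submodule.add_mem _ hl.1 hm.1, hsum⟩⟩, ?_, ?_⟩
  · show Module.finrank ℚ (Submodule.span ℚ (GmapB r P)) = P.ncard
    rw [hspan, ← star_ncard_eq_finrank hfin hpos hstar]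
  · intro Ψ' hcl' hrk' hsub'
    have hle : Submodule.span ℚ P ≤ Submodule.span ℚ Ψ' := by
      rw [← hspan]
      exact Submodule.span_mono hsub'
    have heq : Submodule.span ℚ P = Submodule.span ℚ Ψ' := by
      apply Submodule.eq_of_le_of_finrank_eq hle
      rw [← star_ncard_eq_finrank hfin hpos hstar]
      exact hrk'.symm
    apply Set.Subset.antisymm
    · intro v hv
      exact ⟨heq ▸ Submodule.subset_span hv, hcl'.1 hv⟩
    · exact hsub'

lemma F_G_eq {P : Set (Fin r → ℚ)} (hpos : P ⊆ posB r) (hstar : starB r P) :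
    FmapB r (GmapB r P) = P := by
  have hfin : P.Finite := posB_finite.subset hpos
  have hPG : P ⊆ GmapB r P := fun v hv =>
    ⟨Submodule.subset_span hv, posB_subset_rootsB (hpos hv)⟩
  have hmaster : ∀ i j : ℕ, ∀ σ : ℚ, 1 ≤ i → i ≤ j → j ≤ r → (σ = 1 ∨ σ = -1) →
      vec r i j σ ∈ Submodule.span ℚ P →
      (i = j → eB r i ∈ P) ∧
      (i < j → ((eB r i ∈ P ∧ eB r j ∈ P) ∨ Relation.TransGen (edgeP r P) i j)) :=
    fun i j σ h1 h2 h3 h4 h5 => master P.ncard P hfin le_rfl hpos hstar i j σ h1 h2 h3 h4 h5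
  apply Set.Subset.antisymm
  · -- F(G(P)) ⊆ P
    intro v hv
    rcases mem_FmapB_elim hv with ⟨i, j, σ, hi, hij, hj, hσ, hveq, hvΨ, hmin1, hmin2⟩ |
        ⟨i, hi, hir, hveq, hiΨ⟩
    · have hvsp : vec r i j σ ∈ Submodule.span ℚ P := by
        rw [hveq] at hvΨ
        exact hvΨ.1
      rcases (hmaster i j σ hi (le_of_lt hij) hj hσ hvsp).2 hij with ⟨hA, hB⟩ | hch
      · exact absurd (by rw [vec_self]; exact hPG hA)
          (hmin1 i 1 (le_refl i) hij (Or.inl rfl))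
      · obtain ⟨d, hd, hdch⟩ := Relation.TransGen.head'_iff.mp hch
        have hdj : d ≤ j := rtchain_le hdch
        obtain ⟨hd1, hd2, hd3, hd4⟩ := hd
        have hdj' : d = j := by
          by_contra hne
          have hdlt : d < j := by omega
          rcases hd4 with hm | hm
          · exact hmin1 d 1 (by omega) hdlt (Or.inl rfl) (hPG hm)
          · exact hmin1 d (-1) (by omega) hdlt (Or.inr rfl) (hPG hm)
        rw [hdj'] at hd4
        rw [hveq]
        rcases hd4 with hm | hm
        · by_cases hσ1 : σ = 1
          · rw [hσ1]
            exact hm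
          · exfalso
            have hσm : σ = -1 := by tauto
            have hejsp : eB r j ∈ Submodule.span ℚ P := by
              have hid : eB r j = (2⁻¹ : ℚ) • (vec r i j 1 - vec r i j σ) := by
                rw [vec_of_ne (by omega : i ≠ j), vec_of_ne (by omega : i ≠ j), hσm]
                module
              rw [hid]
              exact Submodule.smul_mem _ _
                (Submodule.sub_mem _ (Submodule.subset_span hm) hvsp)
            have hejP : eB r j ∈ P :=
              (hmaster j j 1 (by omega) (le_refl j) hj (Or.inl rfl)
                (by rw [vec_self]; exact hejsp)).1 rfl
            have hcontra := (star_second hstar hi (le_of_lt hij) hj (by omega) (le_refl j)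
              (Or.inl rfl) (Or.inl rfl) hm (by rw [vec_self]; exact hejP)).1
            omega
        · by_cases hσ1 : σ = -1
          · rw [hσ1]
            exact hm
          · exfalso
            have hσm : σ = 1 := by tauto
            have hejsp : eB r j ∈ Submodule.span ℚ P := by
              have hid : eB r j = (2⁻¹ : ℚ) • (vec r i j σ - vec r i j (-1)) := by
                rw [vec_of_ne (by omega : i ≠ j), vec_of_ne (by omega : i ≠ j), hσm]
                module
              rw [hid]
              exact Submodule.smul_mem _ _
                (Submodule.sub_mem _ hvsp (Submodule.subset_span hm))
            have hejP : eB r j ∈ P :=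
              (hmaster j j 1 (by omega) (le_refl j) hj (Or.inl rfl)
                (by rw [vec_self]; exact hejsp)).1 rfl
            have hcontra := (star_second hstar hi (le_of_lt hij) hj (by omega) (le_refl j)
              (Or.inr rfl) (Or.inl rfl) hm (by rw [vec_self]; exact hejP)).1
            omega
    · rw [hveq]
      have hisp : eB r i ∈ Submodule.span ℚ P := hiΨ.1
      exact (hmaster i i 1 hi (le_refl i) hir (Or.inl rfl)
        (by rw [vec_self]; exact hisp)).1 rfl
  · -- P ⊆ F(G(P))
    intro v hv
    obtain ⟨i, j, σ, hi, hij, hj, hσ, hveq⟩ := mem_posB_iff.mp (hpos hv)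
    subst hveq
    rcases eq_or_lt_of_le hij with he | hlt
    · have hee : vec r i j σ = eB r i := by rw [← he, vec_self]
      rw [hee] at hv ⊢
      exact mem_FmapB_short hi (by omega) (hPG hv)
    · refine mem_FmapB_long hi hlt hj hσ (hPG hv) ?_ ?_
      · intro j' τ h1 h2 hτ hmm
        have hsp : vec r i j' τ ∈ Submodule.span ℚ P := hmm.1
        rcases eq_or_lt_of_le h1 with he | hlt'
        · have heiP : eB r i ∈ P := by
            apply (hmaster i i 1 hi (le_refl i) (by omega) (Or.inl rfl) ?_).1 rfl
            rw [vec_self]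
            have hee : vec r i j' τ = eB r i := by rw [← he, vec_self]
            rw [← hee]
            exact hsp
          have := (star_first hstar hi (le_of_lt hlt) hj (le_refl i) (by omega) hσ (Or.inl rfl)
            hv (by rw [vec_self]; exact heiP)).1
          omega
        · rcases (hmaster i j' τ hi (le_of_lt hlt') (by omega) hτ hsp).2 hlt' with ⟨hA, hB⟩ | hch
          · have := (star_first hstar hi (le_of_lt hlt) hj (le_refl i) (by omega) hσ (Or.inl rfl)
              hv (by rw [vec_self]; exact hA)).1
            omega
          · obtain ⟨d, hd, hdch⟩ := Relation.TransGen.head'_iff.mp hch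
            have hdj : d ≤ j' := rtchain_le hdch
            obtain ⟨hd1, hd2, hd3, hd4⟩ := hd
            rcases hd4 with hm | hm
            · have := (star_first hstar hi (le_of_lt hlt) hj (le_of_lt hd2) hd3 hσ (Or.inl rfl)
                hv hm).1
              omega
            · have := (star_first hstar hi (le_of_lt hlt) hj (le_of_lt hd2) hd3 hσ (Or.inr rfl)
                hv hm).1
              omega
      · intro i' τ h1 h2 hτ hmm
        have hsp : vec r i' j τ ∈ Submodule.span ℚ P := hmm.1
        rcases eq_or_lt_of_le h2 with he | hlt'
        · have hejP : eB r j ∈ P := by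
            apply (hmaster j j 1 (by omega) (le_refl j) hj (Or.inl rfl) ?_).1 rfl
            rw [vec_self]
            have hee : vec r i' j τ = eB r j := by rw [he, vec_self]
            rw [← hee]
            exact hsp
          have := (star_second hstar hi (le_of_lt hlt) hj (by omega) (le_refl j) hσ (Or.inl rfl)
            hv (by rw [vec_self]; exact hejP)).1
          omega
        · rcases (hmaster i' j τ (by omega) (le_of_lt hlt') hj hτ hsp).2 hlt' with ⟨hA, hB⟩ | hch
          · have := (star_second hstar hi (le_of_lt hlt) hj (by omega) (le_refl j) hσ (Or.inl rfl)
              hv (by rw [vec_self]; exact hB)).1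
            omega
          · obtain ⟨d, hdch, hd⟩ := Relation.TransGen.tail'_iff.mp hch
            have hdi : i' ≤ d := rtchain_le hdch
            obtain ⟨hd1, hd2, hd3, hd4⟩ := hd
            rcases hd4 with hm | hm
            · have := (star_second hstar hi (le_of_lt hlt) hj hd1 (le_of_lt hd2) hσ (Or.inl rfl)
                hv hm).1
              omega
            · have := (star_second hstar hi (le_of_lt hlt) hj hd1 (le_of_lt hd2) hσ (Or.inr rfl)
                hv hm).1
              omega

end St19



theorem statement19 (r k : ℕ) (hr : 2 ≤ r) (hk : k ≤ r) :
    Set.BijOn (FmapB r)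
      {Ψ : Set (Fin r → ℚ) | IsMaxClosedOfRank (rootsB r) Ψ (r - k)}
      {P : Set (Fin r → ℚ) | P ⊆ posB r ∧ P.ncard = r - k ∧ starB r P} ∧
    Set.InvOn (GmapB r) (FmapB r)
      {Ψ : Set (Fin r → ℚ) | IsMaxClosedOfRank (rootsB r) Ψ (r - k)}
      {P : Set (Fin r → ℚ) | P ⊆ posB r ∧ P.ncard = r - k ∧ starB r P} := by
  have hmapsF : Set.MapsTo (FmapB r)
      {Ψ : Set (Fin r → ℚ) | IsMaxClosedOfRank (rootsB r) Ψ (r - k)}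
      {P : Set (Fin r → ℚ) | P ⊆ posB r ∧ P.ncard = r - k ∧ starB r P} := by
    intro Ψ hΨ
    obtain ⟨h1, h2, h3⟩ := St19.F_target hΨ
    exact ⟨h1, h2, h3⟩
  have hmapsG : Set.MapsTo (GmapB r)
      {P : Set (Fin r → ℚ) | P ⊆ posB r ∧ P.ncard = r - k ∧ starB r P}
      {Ψ : Set (Fin r → ℚ) | IsMaxClosedOfRank (rootsB r) Ψ (r - k)} := by
    intro P hP
    obtain ⟨h1, h2, h3⟩ := hP
    have := St19.G_source h1 h3
    rw [h2] at this
    exact this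
  have hleft : Set.LeftInvOn (GmapB r) (FmapB r)
      {Ψ : Set (Fin r → ℚ) | IsMaxClosedOfRank (rootsB r) Ψ (r - k)} :=
    fun Ψ hΨ => St19.G_F_eq hΨ
  have hright : Set.RightInvOn (GmapB r) (FmapB r)
      {P : Set (Fin r → ℚ) | P ⊆ posB r ∧ P.ncard = r - k ∧ starB r P} :=
    fun P hP => St19.F_G_eq hP.1 hP.2.2
  exact ⟨Set.InvOn.bijOn ⟨hleft, hright⟩ hmapsF hmapsG, hleft, hright⟩
end
end
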